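/- Bisimilarity of airplanes (Proposition 5): Airplane ≈ Airplanē, where Airplane = ((Eng_L ⊎ Eng_R) ‖ Check)∖{warning} and Airplanē = ((Enḡ_L ⊎ Enḡ_R) ‖ Check)∖{warning}, with Eng_L, Eng_R renamed disjoint copies of Eng (with identifiers L and R and renamed state variable, actuator and sensor), Enḡ_L, Enḡ_R the corresponding renamed copies of the variant engine Enḡ whose evolution map uses heat(ξu,cool) = −0.8 when ξu(cool) = on, and Check the non-interfering monitoring process defined below. -/

import Mathlib

namespace CCPS

/-! ## Names and values -/

abbrev Chan := ℕ
abbrev SensName := ℕ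
abbrev ActName := ℕ
abbrev Val := ℝ

/-! ## Processes (value binders as functions, process variables in de Bruijn style) -/

inductive Proc : Type where
  | nil   : Proc
  | pvar  : ℕ → Proc
  | tick  : Proc → Proc
  | par   : Proc → Proc → Proc
  | out   : Chan → Val → Proc → Proc → Proc      -- ⌊c̄⟨v⟩.P⌋Q
  | inp   : Chan → (Val → Proc) → Proc → Proc    -- ⌊c(x).P⌋Q
  | read  : SensName → (Val → Proc) → Proc → Proc -- ⌊s?(x).P⌋Q
  | write : ActName → Val → Proc → Proc → Proc   -- ⌊a!⟨v⟩.P⌋Q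
  | res   : Proc → Chan → Proc                   -- P∖c
  | fix   : Proc → Proc                          -- fix X.P  (binds de Bruijn index 0)

/-- Lift (shift) all process variables ≥ cutoff `c` by one. -/
def Proc.lift (c : ℕ) : Proc → Proc
  | .nil => .nil
  | .pvar m => if m < c then .pvar m else .pvar (m+1)
  | .tick P => .tick (Proc.lift c P)
  | .par P Q => .par (Proc.lift c P) (Proc.lift c Q)
  | .out ch v P Q => .out ch v (Proc.lift c P) (Proc.lift c Q)
  | .inp ch f Q => .inp ch (fun v => Proc.lift c (f v)) (Proc.lift c Q)
  | .read s f Q => .read s (fun v => Proc.lift c (f v)) (Proc.lift c Q)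
  | .write a v P Q => .write a v (Proc.lift c P) (Proc.lift c Q)
  | .res P ch => .res (Proc.lift c P) ch
  | .fix P => .fix (Proc.lift (c+1) P)

/-- Substitute process variable `n` by `R`. -/
def Proc.subst : Proc → ℕ → Proc → Proc
  | .nil, _, _ => .nil
  | .pvar m, n, R => if m = n then R else if n < m then .pvar (m-1) else .pvar m
  | .tick P, n, R => .tick (Proc.subst P n R)
  | .par P Q, n, R => .par (Proc.subst P n R) (Proc.subst Q n R)
  | .out ch v P Q, n, R => .out ch v (Proc.subst P n R) (Proc.subst Q n R)
  | .inp ch f Q, n, R => .inp ch (fun v => Proc.subst (f v) n R) (Proc.subst Q n R)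
  | .read s f Q, n, R => .read s (fun v => Proc.subst (f v) n R) (Proc.subst Q n R)
  | .write a v P Q, n, R => .write a v (Proc.subst P n R) (Proc.subst Q n R)
  | .res P ch, n, R => .res (Proc.subst P n R) ch
  | .fix P, n, R => .fix (Proc.subst P (n+1) (Proc.lift 0 R))

/-- Unfolding of recursion: P[fix X.P / X]. -/
def Proc.unfold (P : Proc) : Proc := Proc.subst P 0 (.fix P)

/-! ## Labels -/

inductive Label : Type where
  | tick  : Label
  | tau   : Label
  | out   : Chan → Val → Label     -- c̄v
  | inp   : Chan → Val → Label     -- cv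
  | write : ActName → Val → Label  -- a!v
  | read  : SensName → Val → Label -- s?v

/-! ## Labelled transition system for processes.

Untimed transitions `UStep` (labels different from tick) are defined first;
then timed transitions `TStep` (which use the absence of τ-transitions
negatively) are defined on top of them, and `Step` combines the two. -/

inductive UStep : Proc → Label → Proc → Prop where
  | outp  : UStep (.out c v P Q) (.out c v) P
  | inpp  : UStep (.inp c f Q) (.inp c v) (f v)
  | write : UStep (.write a v P Q) (.write a v) P
  | read  : UStep (.read s f Q) (.read s v) (f v)
  | comL  : UStep P (.out c v) P' → UStep Q (.inp c v) Q' →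
            UStep (.par P Q) .tau (.par P' Q')
  | comR  : UStep P (.inp c v) P' → UStep Q (.out c v) Q' →
            UStep (.par P Q) .tau (.par P' Q')
  | parL  : UStep P l P' → l ≠ .tick → UStep (.par P Q) l (.par P' Q)
  | parR  : UStep Q l Q' → l ≠ .tick → UStep (.par P Q) l (.par P Q')
  | res   : UStep P l P' → (∀ v, l ≠ .inp c v ∧ l ≠ .out c v) →
            UStep (.res P c) l (.res P' c)
  | unfold : UStep (Proc.unfold P) l Q → UStep (.fix P) l Q

inductive TStep : Proc → Proc → Prop where
  | nil          : TStep .nil .nil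
  | delay        : TStep (.tick P) P
  | timeoutOut   : TStep (.out c v P Q) Q
  | timeoutInp   : TStep (.inp c f Q) Q
  | timeoutRead  : TStep (.read s f Q) Q
  | timeoutWrite : TStep (.write a v P Q) Q
  | timePar      : TStep P P' → TStep Q Q' → (∀ R, ¬ UStep (.par P Q) .tau R) →
                   TStep (.par P Q) (.par P' Q')
  | res          : TStep P P' → TStep (.res P c) (.res P' c)
  | unfold       : TStep (Proc.unfold P) Q → TStep (.fix P) Q

/-- The process LTS. -/
def Step (P : Proc) (l : Label) (Q : Proc) : Prop :=
  match l with
  | .tick => TStep P Q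
  | _ => UStep P l Q

/-! ## Structural congruence: the least congruence containing commutativity and
associativity of parallel composition, with nil as neutral element. -/

inductive SC : Proc → Proc → Prop where
  | refl      : SC P P
  | symm      : SC P Q → SC Q P
  | trans     : SC P Q → SC Q R → SC P R
  | parComm   : SC (.par P Q) (.par Q P)
  | parAssoc  : SC (.par (.par P Q) R) (.par P (.par Q R))
  | parNil    : SC (.par P .nil) P
  | tickCong  : SC P P' → SC (.tick P) (.tick P')
  | parCong   : SC P P' → SC Q Q' → SC (.par P Q) (.par P' Q')
  | outCong   : SC P P' → SC Q Q' → SC (.out c v P Q) (.out c v P' Q')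
  | inpCong   : (∀ v, SC (f v) (g v)) → SC Q Q' → SC (.inp c f Q) (.inp c g Q')
  | readCong  : (∀ v, SC (f v) (g v)) → SC Q Q' → SC (.read s f Q) (.read s g Q')
  | writeCong : SC P P' → SC Q Q' → SC (.write a v P Q) (.write a v P' Q')
  | resCong   : SC P P' → SC (.res P c) (.res P' c)
  | fixCong   : SC P P' → SC (.fix P) (.fix P')

/-! ## Static predicates on processes -/

/-- All free process variables are < d. -/
inductive ClosedAbove : ℕ → Proc → Prop where
  | nil   : ClosedAbove d .nil
  | pvar  : m < d → ClosedAbove d (.pvar m)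
  | tick  : ClosedAbove d P → ClosedAbove d (.tick P)
  | par   : ClosedAbove d P → ClosedAbove d Q → ClosedAbove d (.par P Q)
  | out   : ClosedAbove d P → ClosedAbove d Q → ClosedAbove d (.out c v P Q)
  | inp   : (∀ v, ClosedAbove d (f v)) → ClosedAbove d Q → ClosedAbove d (.inp c f Q)
  | read  : (∀ v, ClosedAbove d (f v)) → ClosedAbove d Q → ClosedAbove d (.read s f Q)
  | write : ClosedAbove d P → ClosedAbove d Q → ClosedAbove d (.write a v P Q)
  | res   : ClosedAbove d P → ClosedAbove d (.res P c)
  | fix   : ClosedAbove (d+1) P → ClosedAbove d (.fix P)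

/-- A closed process: no free process variables. -/
def Proc.Closed (P : Proc) : Prop := ClosedAbove 0 P

/-- `TG n P`: process variable `n` occurs only time-guarded in `P`
(occurrences under `tick.-` or in the timeout continuation `Q` of `⌊π.P⌋Q`
are time-guarded). -/
inductive TG : ℕ → Proc → Prop where
  | nil   : TG n .nil
  | pvar  : m ≠ n → TG n (.pvar m)
  | tick  : TG n (.tick P)
  | par   : TG n P → TG n Q → TG n (.par P Q)
  | out   : TG n P → TG n (.out c v P Q)
  | inp   : (∀ v, TG n (f v)) → TG n (.inp c f Q)
  | read  : (∀ v, TG n (f v)) → TG n (.read s f Q)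
  | write : TG n P → TG n (.write a v P Q)
  | res   : TG n P → TG n (.res P c)
  | fix   : TG (n+1) P → TG n (.fix P)

/-- Well-formed processes: in every recursion `fix X.P` all occurrences of `X`
in `P` are time-guarded. -/
inductive WF : Proc → Prop where
  | nil   : WF .nil
  | pvar  : WF (.pvar m)
  | tick  : WF P → WF (.tick P)
  | par   : WF P → WF Q → WF (.par P Q)
  | out   : WF P → WF Q → WF (.out c v P Q)
  | inp   : (∀ v, WF (f v)) → WF Q → WF (.inp c f Q)
  | read  : (∀ v, WF (f v)) → WF Q → WF (.read s f Q)
  | write : WF P → WF Q → WF (.write a v P Q)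
  | res   : WF P → WF (.res P c)
  | fix   : TG 0 P → WF P → WF (.fix P)

/-- Non-interfering process: it never reads sensors nor writes actuators. -/
inductive NonInterfering : Proc → Prop where
  | nil  : NonInterfering .nil
  | pvar : NonInterfering (.pvar m)
  | tick : NonInterfering P → NonInterfering (.tick P)
  | par  : NonInterfering P → NonInterfering Q → NonInterfering (.par P Q)
  | out  : NonInterfering P → NonInterfering Q → NonInterfering (.out c v P Q)
  | inp  : (∀ v, NonInterfering (f v)) → NonInterfering Q → NonInterfering (.inp c f Q)
  | res  : NonInterfering P → NonInterfering (.res P c)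
  | fix  : NonInterfering P → NonInterfering (.fix P)

/-- `DevOK A S P`: every actuator mentioned in `P` is in `A` and every sensor
mentioned in `P` is in `S`. -/
inductive DevOK (A S : Finset ℕ) : Proc → Prop where
  | nil   : DevOK A S .nil
  | pvar  : DevOK A S (.pvar m)
  | tick  : DevOK A S P → DevOK A S (.tick P)
  | par   : DevOK A S P → DevOK A S Q → DevOK A S (.par P Q)
  | out   : DevOK A S P → DevOK A S Q → DevOK A S (.out c v P Q)
  | inp   : (∀ v, DevOK A S (f v)) → DevOK A S Q → DevOK A S (.inp c f Q)
  | read  : s ∈ S → (∀ v, DevOK A S (f v)) → DevOK A S Q → DevOK A S (.read s f Q)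
  | write : a ∈ A → DevOK A S P → DevOK A S Q → DevOK A S (.write a v P Q)
  | res   : DevOK A S P → DevOK A S (.res P c)
  | fix   : DevOK A S P → DevOK A S (.fix P)

/-! ## Physical environments -/

structure Env where
  X : Finset ℕ                       -- state variables
  A : Finset ℕ                       -- actuators
  S : Finset ℕ                       -- sensors
  xi_x : {n // n ∈ X} → ℝ            -- state function
  xi_u : {n // n ∈ A} → ℝ            -- actuator function
  xi_w : {n // n ∈ X} → ℝ            -- uncertainty function
  evol : ({n // n ∈ X} → ℝ) → ({n // n ∈ A} → ℝ) → ({n // n ∈ X} → ℝ) →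
         Set ({n // n ∈ X} → ℝ)      -- evolution map
  xi_e : {n // n ∈ S} → ℝ            -- sensor-error function
  meas : ({n // n ∈ X} → ℝ) → ({n // n ∈ S} → ℝ) →
         Set ({n // n ∈ S} → ℝ)      -- measurement map
  inv  : ({n // n ∈ X} → ℝ) → Prop   -- invariant function

/-- Possible measurements of sensor `s` in `E`. -/
def readSensor (E : Env) (s : ℕ) : Set ℝ :=
  { r | ∃ h : s ∈ E.S, ∃ ξ ∈ E.meas E.xi_x E.xi_e, r = ξ ⟨s, h⟩ }

/-- Update the value of actuator `a` to `v`. -/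
def updateAct (E : Env) (a : ℕ) (v : ℝ) : Env :=
  { E with xi_u := fun b => if (b : ℕ) = a then v else E.xi_u b }

/-- The set of next admissible environments. -/
def nextEnv (E : Env) : Set Env :=
  { E' | ∃ ξ ∈ E.evol E.xi_x E.xi_u E.xi_w, E' = { E with xi_x := ξ } }

/-- The invariant of `E`, evaluated at the current state. -/
def invHolds (E : Env) : Prop := E.inv E.xi_x

/-! ## Disjoint union of environments -/

/-- Glue two functions defined on finite sets into one on the union
(well defined on disjoint sets). -/
def glue {X1 X2 : Finset ℕ} (f : {n // n ∈ X1} → ℝ) (g : {n // n ∈ X2} → ℝ) :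
    {n // n ∈ X1 ∪ X2} → ℝ :=
  fun x => if h : (x : ℕ) ∈ X1 then f ⟨x, h⟩
           else g ⟨x, (Finset.mem_union.mp x.2).resolve_left h⟩

/-- Restriction of a function on a union to the left component. -/
def restrL {X1 X2 : Finset ℕ} (f : {n // n ∈ X1 ∪ X2} → ℝ) : {n // n ∈ X1} → ℝ :=
  fun x => f ⟨x, Finset.mem_union_left _ x.2⟩

/-- Restriction of a function on a union to the right component. -/
def restrR {X1 X2 : Finset ℕ} (f : {n // n ∈ X1 ∪ X2} → ℝ) : {n // n ∈ X2} → ℝ :=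
  fun x => f ⟨x, Finset.mem_union_right _ x.2⟩

/-- Disjointness of the name sets of two environments. -/
def EnvDisj (E1 E2 : Env) : Prop :=
  Disjoint E1.X E2.X ∧ Disjoint E1.A E2.A ∧ Disjoint E1.S E2.S

/-- Disjoint union `E1 ⊎ E2` of two environments. -/
def Env.disjUnion (E1 E2 : Env) : Env where
  X := E1.X ∪ E2.X
  A := E1.A ∪ E2.A
  S := E1.S ∪ E2.S
  xi_x := glue E1.xi_x E2.xi_x
  xi_u := glue E1.xi_u E2.xi_u
  xi_w := glue E1.xi_w E2.xi_w
  evol := fun ξ ψ φ =>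
    { ξ' | ∃ ξ1 ∈ E1.evol (restrL ξ) (restrL ψ) (restrL φ),
           ∃ ξ2 ∈ E2.evol (restrR ξ) (restrR ψ) (restrR φ), ξ' = glue ξ1 ξ2 }
  xi_e := glue E1.xi_e E2.xi_e
  meas := fun ξ η =>
    { m | ∃ m1 ∈ E1.meas (restrL ξ) (restrL η),
          ∃ m2 ∈ E2.meas (restrR ξ) (restrR η), m = glue m1 m2 }
  inv := fun ξ => E1.inv (restrL ξ) ∧ E2.inv (restrR ξ)

/-! ## Cyber-physical systems -/

structure CPS where
  env  : Env
  proc : Proc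

/-- Well-formed CPS: closed, time-guarded process mentioning only devices of
its environment. -/
def CPS.WellFormed (M : CPS) : Prop :=
  M.proc.Closed ∧ WF M.proc ∧ DevOK M.env.A M.env.S M.proc

/-- Disjoint union of (non-interfering) CPSs. -/
def CPS.disjUnion (M O : CPS) : CPS :=
  ⟨M.env.disjUnion O.env, .par M.proc O.proc⟩

/-- Untimed CPS transitions (rules Out, Inp, SensRead, ActWrite, Tau). -/
inductive CStepU : CPS → Label → CPS → Prop where
  | out : UStep P (.out c v) P' → invHolds E →
          CStepU ⟨E, P⟩ (.out c v) ⟨E, P'⟩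
  | inp : UStep P (.inp c v) P' → invHolds E →
          CStepU ⟨E, P⟩ (.inp c v) ⟨E, P'⟩
  | sensRead : UStep P (.read s v) P' → invHolds E → v ∈ readSensor E s →
          CStepU ⟨E, P⟩ .tau ⟨E, P'⟩
  | actWrite : UStep P (.write a v) P' → invHolds E →
          CStepU ⟨E, P⟩ .tau ⟨updateAct E a v, P'⟩
  | tau : UStep P .tau P' → invHolds E →
          CStepU ⟨E, P⟩ .tau ⟨E, P'⟩

/-- The CPS LTS (rule Time for tick, `CStepU` otherwise). -/
def CStep (M : CPS) (α : Label) (N : CPS) : Prop :=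
  match α with
  | .tick => TStep M.proc N.proc ∧ (∀ N', ¬ CStepU M .tau N') ∧
             invHolds M.env ∧ N.env ∈ nextEnv M.env
  | _ => CStepU M α N

/-! ## Weak transitions and bisimulation -/

def TauStep (M N : CPS) : Prop := CStep M .tau N

/-- `M ⇒ N`. -/
def WeakTau : CPS → CPS → Prop := Relation.ReflTransGen TauStep

/-- `M ⇒α⇒ N`. -/
def WeakStep (M : CPS) (α : Label) (N : CPS) : Prop :=
  ∃ M₁ M₂, WeakTau M M₁ ∧ CStep M₁ α M₂ ∧ WeakTau M₂ N

/-- `M ⇒α̂⇒ N`. -/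
def WeakHat (M : CPS) (α : Label) (N : CPS) : Prop :=
  match α with
  | .tau => WeakTau M N
  | _ => WeakStep M α N

def IsBisimulation (R : CPS → CPS → Prop) : Prop :=
  (∀ {M N}, R M N → R N M) ∧
  (∀ {M N α M'}, R M N → CStep M α M' → ∃ N', WeakHat N α N' ∧ R M' N')

/-- Weak bisimilarity `M ≈ N`. -/
def Bisim (M N : CPS) : Prop := ∃ R, IsBisimulation R ∧ R M N

/-! ## Traces -/

/-- Reachability in the CPS LTS. -/
def Reach : CPS → CPS → Prop :=
  Relation.ReflTransGen (fun M N => ∃ α, CStep M α N)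

def UntimedStep (M N : CPS) : Prop := ∃ α, α ≠ Label.tick ∧ CStep M α N

def UntimedReach : CPS → CPS → Prop := Relation.ReflTransGen UntimedStep

/-- One time slot: some untimed activity followed by a tick. -/
def SlotStep (M N : CPS) : Prop := ∃ M', UntimedReach M M' ∧ CStep M' .tick N

/-! ## Derived process notation -/

/-- Persistent prefix `π.P := fix X.⌊π.P⌋X` (output). -/
def prefOut (c : Chan) (v : Val) (P : Proc) : Proc :=
  .fix (.out c v (Proc.lift 0 P) (.pvar 0))

/-- Persistent prefix (actuator write). -/
def prefWrite (a : ActName) (v : Val) (P : Proc) : Proc :=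
  .fix (.write a v (Proc.lift 0 P) (.pvar 0))

/-- Persistent prefix (sensor read). -/
def prefRead (s : SensName) (f : Val → Proc) : Proc :=
  .fix (.read s (fun v => Proc.lift 0 (f v)) (.pvar 0))

/-- `tick^k.P`. -/
def Proc.ticks : ℕ → Proc → Proc
  | 0, P => P
  | n+1, P => .tick (Proc.ticks n P)

/-! ## The engine case study -/

noncomputable section
open Classical

def engDelta : ℝ := 0.4   -- uncertainty δ
def engEps : ℝ := 0.1     -- sensor error ε

/-- Value written on the actuator `cool` to turn the cooling on
(the actuator is on iff its value is negative). -/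
def valOn : Val := -1
/-- Value written on the actuator `cool` to turn the cooling off. -/
def valOff : Val := 1

def IsOn (u : ℝ) : Prop := u < 0
def IsOff (u : ℝ) : Prop := 0 ≤ u

/-- `heat(ξu, cool)`: `-coolRate` if the cooling is active, `+1` otherwise. -/
def engHeat (coolRate : ℝ) (u : ℝ) : ℝ := if u < 0 then -coolRate else 1

def warningCh : Chan := 0
def alarmCh : Chan := 1
def failureCh : Chan := 2

/-- The physical environment of the engine, with cooling power `coolRate`,
state variable `x` (temperature), actuator `a` (cool) and sensor `s`. -/
def EngEnvN (coolRate : ℝ) (x a s : ℕ) : Env where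
  X := {x}
  A := {a}
  S := {s}
  xi_x := fun _ => 0
  xi_u := fun _ => valOff
  xi_w := fun _ => engDelta
  evol := fun ξ ψ _ =>
    { ξ' | ∃ γ ∈ Set.Icc (-engDelta) engDelta,
           ∀ y u, ξ' y = ξ y + engHeat coolRate (ψ u) + γ }
  xi_e := fun _ => engEps
  meas := fun ξ _ =>
    { m | ∀ t y, m t ∈ Set.Icc (ξ y - engEps) (ξ y + engEps) }
  inv := fun ξ => ∀ y, 0 ≤ ξ y ∧ ξ y ≤ 30

/-- The controller of the engine with identifier `ID`, actuator `a` and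
sensor `s`:
`Ctrl = fix X. s?(x). if x > 10 then Cooling else tick.X` with
`Cooling = a!⟨on⟩.fix Y.tick⁵.s?(x). if x > 10 then w̄arning⟨ID⟩.Y else a!⟨off⟩.tick.X`. -/
def CtrlN (ID : Val) (a s : ℕ) : Proc :=
  .fix (prefRead s (fun x =>
    if 10 < x then
      prefWrite a valOn (.fix (Proc.ticks 5 (prefRead s (fun y =>
        if 10 < y then prefOut warningCh ID (.pvar 0)
        else prefWrite a valOff (.tick (.pvar 1))))))
    else .tick (.pvar 0)))

/-- The engine with cooling power `coolRate`. -/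
def EngGen (coolRate : ℝ) : CPS := ⟨EngEnvN coolRate 0 0 0, CtrlN 0 0 0⟩

/-- The engine `Eng`. -/
def Eng : CPS := EngGen 1
/-- The variant engine `Enḡ` (heat = −0.8 when cooling). -/
def EngBar : CPS := EngGen 0.8
/-- The variant engine `Enĝ` (heat = −0.7 when cooling). -/
def EngHat : CPS := EngGen 0.7

/-- Current temperature of an engine-like CPS (state variable named 0). -/
def CPS.temp (M : CPS) : ℝ :=
  if h : (0 : ℕ) ∈ M.env.X then M.env.xi_x ⟨0, h⟩ else 0

/-- Current value of the `cool` actuator of an engine-like CPS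
(actuator named 0). -/
def CPS.cool (M : CPS) : ℝ :=
  if h : (0 : ℕ) ∈ M.env.A then M.env.xi_u ⟨0, h⟩ else 0

/-! ## The airplane case study -/

def idL : Val := 0
def idR : Val := 1

/-- `CheckAux id m` is `Check^id_(5-m)`; the free process variable 0 is the
recursion variable `X` of `Check`. -/
def CheckAux (id : Val) : ℕ → Proc
  | 0 => .inp warningCh (fun z =>
           if z ≠ id then prefOut alarmCh 0 (.tick (.pvar 0))
           else prefOut failureCh id (.tick (.pvar 0)))
         (prefOut failureCh id (.pvar 0))
  | m+1 => .inp warningCh (fun y =>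
           if y ≠ id then prefOut alarmCh 0 (.tick (.pvar 0))
           else .tick (CheckAux id m))
         (CheckAux id m)

/-- The monitoring process `Check`. -/
def Check : Proc :=
  .fix (.inp warningCh
    (fun x => if x = idL then CheckAux idL 4 else CheckAux idR 4)
    (.pvar 0))

/-- The left engine (identifier L, devices named 0). -/
def EngL (coolRate : ℝ) : CPS := ⟨EngEnvN coolRate 0 0 0, CtrlN idL 0 0⟩
/-- The right engine (identifier R, devices named 1). -/
def EngR (coolRate : ℝ) : CPS := ⟨EngEnvN coolRate 1 1 1, CtrlN idR 1 1⟩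

/-- `Airplane(r) = ((Eng_L ⊎ Eng_R) ‖ Check)∖warning` with cooling power r. -/
def AirplaneGen (coolRate : ℝ) : CPS :=
  ⟨(EngEnvN coolRate 0 0 0).disjUnion (EngEnvN coolRate 1 1 1),
   .res (.par (.par (CtrlN idL 0 0) (CtrlN idR 1 1)) Check) warningCh⟩

def Airplane : CPS := AirplaneGen 1
def AirplaneBar : CPS := AirplaneGen 0.8

end


/-! ### Substitution infrastructure -/

theorem lift_lift (P : Proc) : ∀ c d, d ≤ c →
    Proc.lift d (Proc.lift c P) = Proc.lift (c+1) (Proc.lift d P) := by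
  induction P with
  | nil => intros; rfl
  | pvar m =>
      intro c d h
      rcases Nat.lt_or_ge m d with h1 | h1
      · simp only [Proc.lift, if_pos h1, if_pos (by omega : m < c),
          if_pos (by omega : m < c + 1), if_pos h1]
      · rcases Nat.lt_or_ge m c with h2 | h2
        · simp only [Proc.lift, if_pos h2, if_neg (by omega : ¬ m < d),
            if_neg (by omega : ¬ m + 1 < d), if_pos (by omega : m + 1 < c + 1)]
        · simp only [Proc.lift, if_neg (by omega : ¬ m < c), if_neg (by omega : ¬ m < d),
            if_neg (by omega : ¬ m + 1 < d), if_neg (by omega : ¬ m + 1 < c + 1)]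
  | tick P ih => intro c d h; simp [Proc.lift, ih c d h]
  | par P Q ih1 ih2 => intro c d h; simp [Proc.lift, ih1 c d h, ih2 c d h]
  | out ch v P Q ih1 ih2 => intro c d h; simp [Proc.lift, ih1 c d h, ih2 c d h]
  | inp ch f Q ihf ihQ => intro c d h; simp [Proc.lift, ihQ c d h]; funext v; exact ihf v c d h
  | read s f Q ihf ihQ => intro c d h; simp [Proc.lift, ihQ c d h]; funext v; exact ihf v c d h
  | write a v P Q ih1 ih2 => intro c d h; simp [Proc.lift, ih1 c d h, ih2 c d h]
  | res P ch ih => intro c d h; simp [Proc.lift, ih c d h]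
  | fix P ih => intro c d h; simp [Proc.lift, ih (c+1) (d+1) (by omega)]

theorem subst_lift (P : Proc) : ∀ n R, Proc.subst (Proc.lift n P) n R = P := by
  induction P with
  | nil => intros; rfl
  | pvar m =>
      intro n R
      rcases Nat.lt_or_ge m n with h | h
      · simp only [Proc.lift, if_pos h, Proc.subst, if_neg (by omega : ¬ m = n),
          if_neg (by omega : ¬ n < m)]
      · simp only [Proc.lift, if_neg (by omega : ¬ m < n), Proc.subst,
          if_neg (by omega : ¬ m + 1 = n), if_pos (by omega : n < m + 1), Nat.add_sub_cancel]
  | tick P ih => intro n R; simp [Proc.lift, Proc.subst, ih]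
  | par P Q ih1 ih2 => intro n R; simp [Proc.lift, Proc.subst, ih1, ih2]
  | out ch v P Q ih1 ih2 => intro n R; simp [Proc.lift, Proc.subst, ih1, ih2]
  | inp ch f Q ihf ihQ => intro n R; simp [Proc.lift, Proc.subst, ihQ]; funext v; exact ihf v n _
  | read s f Q ihf ihQ => intro n R; simp [Proc.lift, Proc.subst, ihQ]; funext v; exact ihf v n _
  | write a v P Q ih1 ih2 => intro n R; simp [Proc.lift, Proc.subst, ih1, ih2]
  | res P ch ih => intro n R; simp [Proc.lift, Proc.subst, ih]
  | fix P ih => intro n R; simp [Proc.lift, Proc.subst, ih]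

theorem lift_subst (P : Proc) : ∀ c n R, c ≤ n → Proc.lift c (Proc.subst P n R) =
    Proc.subst (Proc.lift c P) (n+1) (Proc.lift c R) := by
  induction P with
  | nil => intros; rfl
  | pvar m =>
      intro c n R hcn
      rcases lt_trichotomy m n with h | h | h
      · rcases Nat.lt_or_ge m c with h2 | h2
        · simp only [Proc.subst, if_neg (by omega : ¬ m = n), if_neg (by omega : ¬ n < m),
            Proc.lift, if_pos h2, Proc.subst, if_neg (by omega : ¬ m = n + 1),
            if_neg (by omega : ¬ n + 1 < m)]
        · simp only [Proc.subst, if_neg (by omega : ¬ m = n), if_neg (by omega : ¬ n < m),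
            Proc.lift, if_neg (by omega : ¬ m < c), Proc.subst,
            if_neg (by omega : ¬ m + 1 = n + 1), if_neg (by omega : ¬ n + 1 < m + 1)]
      · subst h
        simp [Proc.subst, Proc.lift, if_neg (by omega : ¬ m < c)]
      · simp only [Proc.subst, if_neg (by omega : ¬ m = n), if_pos h, Proc.lift,
          if_neg (by omega : ¬ m - 1 < c), if_neg (by omega : ¬ m < c), Proc.subst,
          if_neg (by omega : ¬ m + 1 = n + 1), if_pos (by omega : n + 1 < m + 1),
          Nat.add_sub_cancel]
        congr 1; omega
  | tick P ih => intro c n R h; simp [Proc.lift, Proc.subst, ih _ _ _ h]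
  | par P Q ih1 ih2 => intro c n R h; simp [Proc.lift, Proc.subst, ih1 _ _ _ h, ih2 _ _ _ h]
  | out ch v P Q ih1 ih2 => intro c n R h; simp [Proc.lift, Proc.subst, ih1 _ _ _ h, ih2 _ _ _ h]
  | inp ch f Q ihf ihQ =>
      intro c n R h; simp [Proc.lift, Proc.subst, ihQ _ _ _ h]
      funext v; exact ihf v _ _ _ h
  | read s f Q ihf ihQ =>
      intro c n R h; simp [Proc.lift, Proc.subst, ihQ _ _ _ h]
      funext v; exact ihf v _ _ _ h
  | write a v P Q ih1 ih2 => intro c n R h; simp [Proc.lift, Proc.subst, ih1 _ _ _ h, ih2 _ _ _ h]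
  | res P ch ih => intro c n R h; simp [Proc.lift, Proc.subst, ih _ _ _ h]
  | fix P ih =>
      intro c n R h
      simp only [Proc.lift, Proc.subst, ih (c+1) (n+1) _ (by omega), lift_lift R c 0 (by omega)]

theorem ClosedAbove.mono {d d' : ℕ} {P : Proc} (h : ClosedAbove d P) (hd : d ≤ d') :
    ClosedAbove d' P := by
  induction h generalizing d' with
  | nil => exact .nil
  | pvar h => exact .pvar (by omega)
  | tick _ ih => exact .tick (ih hd)
  | par _ _ ih1 ih2 => exact .par (ih1 hd) (ih2 hd)
  | out _ _ ih1 ih2 => exact .out (ih1 hd) (ih2 hd)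
  | inp _ _ ihf ihQ => exact .inp (fun v => ihf v hd) (ihQ hd)
  | read _ _ ihf ihQ => exact .read (fun v => ihf v hd) (ihQ hd)
  | write _ _ ih1 ih2 => exact .write (ih1 hd) (ih2 hd)
  | res _ ih => exact .res (ih hd)
  | fix _ ih => exact .fix (ih (by omega))

theorem lift_closed {d : ℕ} {P : Proc} (h : ClosedAbove d P) : ∀ c, d ≤ c →
    Proc.lift c P = P := by
  induction h with
  | nil => intros; rfl
  | @pvar m d h => intro c hc; simp only [Proc.lift, if_pos (by omega : m < c)]
  | tick _ ih => intro c hc; simp [Proc.lift, ih _ hc]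
  | par _ _ ih1 ih2 => intro c hc; simp [Proc.lift, ih1 _ hc, ih2 _ hc]
  | out _ _ ih1 ih2 => intro c hc; simp [Proc.lift, ih1 _ hc, ih2 _ hc]
  | inp _ _ ihf ihQ => intro c hc; simp [Proc.lift, ihQ _ hc]; funext v; exact ihf v _ hc
  | read _ _ ihf ihQ => intro c hc; simp [Proc.lift, ihQ _ hc]; funext v; exact ihf v _ hc
  | write _ _ ih1 ih2 => intro c hc; simp [Proc.lift, ih1 _ hc, ih2 _ hc]
  | res _ ih => intro c hc; simp [Proc.lift, ih _ hc]
  | fix _ ih => intro c hc; simp [Proc.lift, ih (c+1) (by omega)]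

theorem subst_closed {d : ℕ} {P : Proc} (h : ClosedAbove d P) : ∀ n, d ≤ n → ∀ R,
    Proc.subst P n R = P := by
  induction h with
  | nil => intros; rfl
  | @pvar m d h =>
      intro n hn R
      simp only [Proc.subst, if_neg (by omega : ¬ m = n), if_neg (by omega : ¬ n < m)]
  | tick _ ih => intro n hn R; simp [Proc.subst, ih _ hn]
  | par _ _ ih1 ih2 => intro n hn R; simp [Proc.subst, ih1 _ hn, ih2 _ hn]
  | out _ _ ih1 ih2 => intro n hn R; simp [Proc.subst, ih1 _ hn, ih2 _ hn]
  | inp _ _ ihf ihQ => intro n hn R; simp [Proc.subst, ihQ _ hn]; funext v; exact ihf v _ hn _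
  | read _ _ ihf ihQ => intro n hn R; simp [Proc.subst, ihQ _ hn]; funext v; exact ihf v _ hn _
  | write _ _ ih1 ih2 => intro n hn R; simp [Proc.subst, ih1 _ hn, ih2 _ hn]
  | res _ ih => intro n hn R; simp [Proc.subst, ih _ hn]
  | fix _ ih => intro n hn R; simp [Proc.subst, ih (n+1) (by omega)]
/-! ### Inversion lemmas for the process LTS -/

theorem ustep_fix_iff {P l Q} : UStep (.fix P) l Q ↔ UStep (Proc.unfold P) l Q := by
  constructor
  · intro h; cases h; assumption
  · exact .unfold

theorem tstep_fix_iff {P Q} : TStep (.fix P) Q ↔ TStep (Proc.unfold P) Q := by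
  constructor
  · intro h; cases h; assumption
  · exact .unfold

theorem ustep_tick_no {P l Q} : ¬ UStep (.tick P) l Q := fun h => nomatch h
theorem ustep_nil_no {l Q} : ¬ UStep (.nil) l Q := fun h => nomatch h

theorem ustep_read_iff {s f Q0 l Q} :
    UStep (.read s f Q0) l Q ↔ ∃ v, l = .read s v ∧ Q = f v := by
  constructor
  · intro h; cases h; exact ⟨_, rfl, rfl⟩
  · rintro ⟨v, rfl, rfl⟩; exact .read

theorem ustep_write_iff {a v P0 Q0 l Q} :
    UStep (.write a v P0 Q0) l Q ↔ l = .write a v ∧ Q = P0 := by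
  constructor
  · intro h; cases h; exact ⟨rfl, rfl⟩
  · rintro ⟨rfl, rfl⟩; exact .write

theorem ustep_inp_iff {c f Q0 l Q} :
    UStep (.inp c f Q0) l Q ↔ ∃ v, l = .inp c v ∧ Q = f v := by
  constructor
  · intro h; cases h; exact ⟨_, rfl, rfl⟩
  · rintro ⟨v, rfl, rfl⟩; exact .inpp

theorem ustep_out_iff {c v P0 Q0 l Q} :
    UStep (.out c v P0 Q0) l Q ↔ l = .out c v ∧ Q = P0 := by
  constructor
  · intro h; cases h; exact ⟨rfl, rfl⟩
  · rintro ⟨rfl, rfl⟩; exact .outp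

theorem tstep_tick_iff {P Q} : TStep (.tick P) Q ↔ Q = P := by
  constructor
  · intro h; cases h; rfl
  · rintro rfl; exact .delay

theorem tstep_read_iff {s f Q0 Q} : TStep (.read s f Q0) Q ↔ Q = Q0 := by
  constructor
  · intro h; cases h; rfl
  · rintro rfl; exact .timeoutRead

theorem tstep_write_iff {a v P0 Q0 Q} : TStep (.write a v P0 Q0) Q ↔ Q = Q0 := by
  constructor
  · intro h; cases h; rfl
  · rintro rfl; exact .timeoutWrite

theorem tstep_inp_iff {c f Q0 Q} : TStep (.inp c f Q0) Q ↔ Q = Q0 := by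
  constructor
  · intro h; cases h; rfl
  · rintro rfl; exact .timeoutInp

/-! ### Unfolding persistent prefixes -/

theorem unfold_prefRead (s : SensName) (f : Val → Proc) :
    Proc.unfold (.read s (fun v => Proc.lift 0 (f v)) (.pvar 0)) =
      .read s f (prefRead s f) := by
  simp [Proc.unfold, Proc.subst, subst_lift, prefRead]

theorem unfold_prefWrite (a : ActName) (v : Val) (P : Proc) :
    Proc.unfold (.write a v (Proc.lift 0 P) (.pvar 0)) =
      .write a v P (prefWrite a v P) := by
  simp [Proc.unfold, Proc.subst, subst_lift, prefWrite]

theorem unfold_prefOut (c : Chan) (v : Val) (P : Proc) :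
    Proc.unfold (.out c v (Proc.lift 0 P) (.pvar 0)) =
      .out c v P (prefOut c v P) := by
  simp [Proc.unfold, Proc.subst, subst_lift, prefOut]

theorem ustep_prefRead_iff {s f l Q} :
    UStep (prefRead s f) l Q ↔ ∃ v, l = .read s v ∧ Q = f v := by
  rw [prefRead, ustep_fix_iff, unfold_prefRead, ustep_read_iff]

theorem tstep_prefRead_iff {s f Q} : TStep (prefRead s f) Q ↔ Q = prefRead s f := by
  rw [prefRead, tstep_fix_iff, unfold_prefRead, tstep_read_iff]; exact Iff.rfl

theorem ustep_prefWrite_iff {a v P l Q} :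
    UStep (prefWrite a v P) l Q ↔ l = .write a v ∧ Q = P := by
  rw [prefWrite, ustep_fix_iff, unfold_prefWrite, ustep_write_iff]

theorem tstep_prefWrite_iff {a v P Q} : TStep (prefWrite a v P) Q ↔ Q = prefWrite a v P := by
  rw [prefWrite, tstep_fix_iff, unfold_prefWrite, tstep_write_iff]; exact Iff.rfl

theorem ustep_prefOut_iff {c v P l Q} :
    UStep (prefOut c v P) l Q ↔ l = .out c v ∧ Q = P := by
  rw [prefOut, ustep_fix_iff, unfold_prefOut, ustep_out_iff]

/-! ### Substitution through prefixes -/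

theorem subst_prefRead (s f n R) : Proc.subst (prefRead s f) n R =
    prefRead s (fun v => Proc.subst (f v) n R) := by
  simp [prefRead, Proc.subst, ← lift_subst _ 0 n R (Nat.zero_le n)]

theorem subst_prefWrite (a v P n R) : Proc.subst (prefWrite a v P) n R =
    prefWrite a v (Proc.subst P n R) := by
  simp [prefWrite, Proc.subst, ← lift_subst _ 0 n R (Nat.zero_le n)]

theorem subst_prefOut (c v P n R) : Proc.subst (prefOut c v P) n R =
    prefOut c v (Proc.subst P n R) := by
  simp [prefOut, Proc.subst, ← lift_subst _ 0 n R (Nat.zero_le n)]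

theorem subst_ticks (k P n R) : Proc.subst (Proc.ticks k P) n R =
    Proc.ticks k (Proc.subst P n R) := by
  induction k with
  | zero => rfl
  | succ k ih => simp [Proc.ticks, Proc.subst, ih]
/-! ### Runtime states of the engine controller -/

noncomputable section
open Classical

def YFix (ID : Val) (a s : ℕ) : Proc :=
  .fix (Proc.ticks 5 (prefRead s (fun y =>
    if 10 < y then prefOut warningCh ID (.pvar 0)
    else prefWrite a valOff (.tick (CtrlN ID a s)))))

def RdY (ID : Val) (a s : ℕ) : Proc :=
  prefRead s (fun y =>
    if 10 < y then prefOut warningCh ID (YFix ID a s)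
    else prefWrite a valOff (.tick (CtrlN ID a s)))

def WOn (ID : Val) (a s : ℕ) : Proc := prefWrite a valOn (YFix ID a s)
def WOff (ID : Val) (a s : ℕ) : Proc := prefWrite a valOff (.tick (CtrlN ID a s))

/-! ### Closedness -/

theorem closedAbove_lift {d : ℕ} {P : Proc} (h : ClosedAbove d P) : ∀ c,
    ClosedAbove (d+1) (Proc.lift c P) := by
  induction h with
  | nil => intro c; exact .nil
  | @pvar m d h => intro c; unfold Proc.lift; split <;> exact .pvar (by omega)
  | tick _ ih => intro c; exact .tick (ih c)
  | par _ _ ih1 ih2 => intro c; exact .par (ih1 c) (ih2 c)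
  | out _ _ ih1 ih2 => intro c; exact .out (ih1 c) (ih2 c)
  | inp _ _ ihf ihQ => intro c; exact .inp (fun v => ihf v c) (ihQ c)
  | read _ _ ihf ihQ => intro c; exact .read (fun v => ihf v c) (ihQ c)
  | write _ _ ih1 ih2 => intro c; exact .write (ih1 c) (ih2 c)
  | res _ ih => intro c; exact .res (ih c)
  | fix _ ih => intro c; exact .fix (ih (c+1))

theorem closed_prefRead {d s f} (h : ∀ v, ClosedAbove d (f v)) :
    ClosedAbove d (prefRead s f) :=
  .fix (.read (fun v => closedAbove_lift (h v) 0) (.pvar (by omega)))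

theorem closed_prefWrite {d a v P} (h : ClosedAbove d P) :
    ClosedAbove d (prefWrite a v P) :=
  .fix (.write (closedAbove_lift h 0) (.pvar (by omega)))

theorem closed_prefOut {d c v P} (h : ClosedAbove d P) :
    ClosedAbove d (prefOut c v P) :=
  .fix (.out (closedAbove_lift h 0) (.pvar (by omega)))

theorem closed_ticks {d k P} (h : ClosedAbove d P) : ClosedAbove d (Proc.ticks k P) := by
  induction k with
  | zero => exact h
  | succ k ih => exact .tick ih

theorem closed_CtrlN (ID : Val) (a s : ℕ) : ClosedAbove 0 (CtrlN ID a s) := by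
  refine .fix (closed_prefRead fun v => ?_)
  by_cases hv : 10 < v <;> simp only [CtrlN, hv, if_true, if_false, ite_true, ite_false]
  · refine closed_prefWrite (.fix (closed_ticks (closed_prefRead fun y => ?_)))
    by_cases hy : 10 < y <;> simp only [hy, if_true, if_false, ite_true, ite_false]
    · exact closed_prefOut (.pvar (by omega))
    · exact closed_prefWrite (.tick (.pvar (by omega)))
  · exact .tick (.pvar (by omega))

theorem closed_YFix (ID : Val) (a s : ℕ) : ClosedAbove 0 (YFix ID a s) := by
  refine .fix (closed_ticks (closed_prefRead fun y => ?_))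
  by_cases hy : 10 < y <;> simp only [hy, if_true, if_false, ite_true, ite_false]
  · exact closed_prefOut (.pvar (by omega))
  · exact closed_prefWrite (.tick ((closed_CtrlN ID a s).mono (by omega)))

theorem closed_RdY (ID : Val) (a s : ℕ) : ClosedAbove 0 (RdY ID a s) := by
  refine closed_prefRead fun y => ?_
  by_cases hy : 10 < y <;> simp only [RdY, hy, if_true, if_false, ite_true, ite_false]
  · exact closed_prefOut (closed_YFix ID a s)
  · exact closed_prefWrite (.tick (closed_CtrlN ID a s))

/-! ### Transition characterization of the controller states -/

theorem ustep_CtrlN_iff {ID a s l Q} : UStep (CtrlN ID a s) l Q ↔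
    ∃ v, l = .read s v ∧ Q = (if 10 < v then WOn ID a s else .tick (CtrlN ID a s)) := by
  have hu : Proc.unfold (prefRead s (fun x =>
      if 10 < x then prefWrite a valOn (.fix (Proc.ticks 5 (prefRead s (fun y =>
        if 10 < y then prefOut warningCh ID (.pvar 0)
        else prefWrite a valOff (.tick (.pvar 1))))))
      else .tick (.pvar 0)))
      = prefRead s (fun x => if 10 < x then WOn ID a s else .tick (CtrlN ID a s)) := by
    show Proc.subst _ 0 (CtrlN ID a s) = _
    rw [subst_prefRead]
    congr 1; funext x
    by_cases hx : 10 < x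
    · rw [if_pos hx, if_pos hx, subst_prefWrite, WOn]
      congr 1
      rw [show Proc.subst (.fix (Proc.ticks 5 (prefRead s (fun y =>
          if 10 < y then prefOut warningCh ID (.pvar 0)
          else prefWrite a valOff (.tick (.pvar 1)))))) 0 (CtrlN ID a s)
        = .fix (Proc.subst (Proc.ticks 5 (prefRead s (fun y =>
          if 10 < y then prefOut warningCh ID (.pvar 0)
          else prefWrite a valOff (.tick (.pvar 1))))) 1
            (Proc.lift 0 (CtrlN ID a s))) from rfl,
        lift_closed (closed_CtrlN ID a s) 0 le_rfl, subst_ticks, subst_prefRead, YFix]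
      refine congrArg Proc.fix (congrArg (Proc.ticks 5) (congrArg (prefRead s)
        (funext fun y => ?_)))
      by_cases hy : 10 < y
      · rw [if_pos hy, if_pos hy, subst_prefOut,
          show Proc.subst (Proc.pvar 0) 1 (CtrlN ID a s) = .pvar 0 from rfl]
      · rw [if_neg hy, if_neg hy, subst_prefWrite,
          show Proc.subst (Proc.tick (.pvar 1)) 1 (CtrlN ID a s)
            = .tick (CtrlN ID a s) from rfl]
    · rw [if_neg hx, if_neg hx,
        show Proc.subst (Proc.tick (.pvar 0)) 0 (CtrlN ID a s)
          = .tick (CtrlN ID a s) from rfl]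
  rw [show CtrlN ID a s = .fix (prefRead s (fun x =>
      if 10 < x then prefWrite a valOn (.fix (Proc.ticks 5 (prefRead s (fun y =>
        if 10 < y then prefOut warningCh ID (.pvar 0)
        else prefWrite a valOff (.tick (.pvar 1))))))
      else .tick (.pvar 0))) from rfl, ustep_fix_iff, hu, ustep_prefRead_iff]
  exact Iff.rfl

theorem unfold_YFixBody {ID a s} : Proc.unfold (Proc.ticks 5 (prefRead s (fun y =>
      if 10 < y then prefOut warningCh ID (.pvar 0)
      else prefWrite a valOff (.tick (CtrlN ID a s)))))
    = Proc.ticks 5 (RdY ID a s) := by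
  show Proc.subst _ 0 (YFix ID a s) = _
  rw [subst_ticks, subst_prefRead,
    show RdY ID a s = prefRead s (fun y => if 10 < y then prefOut warningCh ID (YFix ID a s)
      else prefWrite a valOff (.tick (CtrlN ID a s))) from rfl]
  refine congrArg (Proc.ticks 5) (congrArg (prefRead s) (funext fun y => ?_))
  by_cases hy : 10 < y
  · rw [if_pos hy, if_pos hy, subst_prefOut,
      show Proc.subst (Proc.pvar 0) 0 (YFix ID a s) = YFix ID a s from rfl]
  · rw [if_neg hy, if_neg hy, subst_prefWrite,
      show Proc.subst (Proc.tick (CtrlN ID a s)) 0 (YFix ID a s)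
        = .tick (Proc.subst (CtrlN ID a s) 0 (YFix ID a s)) from rfl,
      subst_closed (closed_CtrlN ID a s) 0 le_rfl]

theorem ustep_YFix_no {ID a s l Q} : ¬ UStep (YFix ID a s) l Q := by
  rw [YFix, ustep_fix_iff, unfold_YFixBody]
  exact ustep_tick_no

theorem tstep_YFix_iff {ID a s Q} : TStep (YFix ID a s) Q ↔ Q = Proc.ticks 4 (RdY ID a s) := by
  rw [YFix, tstep_fix_iff, unfold_YFixBody]
  exact tstep_tick_iff

theorem ustep_ticksSucc_no {k P l Q} : ¬ UStep (Proc.ticks (k+1) P) l Q := ustep_tick_no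

theorem tstep_ticksSucc_iff {k P Q} : TStep (Proc.ticks (k+1) P) Q ↔ Q = Proc.ticks k P :=
  tstep_tick_iff

theorem ustep_RdY_iff {ID a s l Q} : UStep (RdY ID a s) l Q ↔
    ∃ v, l = .read s v ∧ Q = (if 10 < v then prefOut warningCh ID (YFix ID a s)
      else WOff ID a s) := by
  rw [show RdY ID a s = prefRead s (fun y => if 10 < y then prefOut warningCh ID (YFix ID a s)
      else prefWrite a valOff (.tick (CtrlN ID a s))) from rfl, ustep_prefRead_iff]
  exact Iff.rfl

theorem ustep_WOn_iff {ID a s l Q} : UStep (WOn ID a s) l Q ↔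
    l = .write a valOn ∧ Q = YFix ID a s := ustep_prefWrite_iff

theorem ustep_WOff_iff {ID a s l Q} : UStep (WOff ID a s) l Q ↔
    l = .write a valOff ∧ Q = .tick (CtrlN ID a s) := ustep_prefWrite_iff

/-! ### The Check process -/

theorem ustep_Check_label {l Q} (h : UStep Check l Q) : ∃ v, l = .inp warningCh v := by
  rw [Check, ustep_fix_iff] at h
  obtain ⟨v, hl, -⟩ := ustep_inp_iff.mp h
  exact ⟨v, hl⟩

theorem tstep_Check_iff {Q} : TStep Check Q ↔ Q = Check := by
  rw [Check, tstep_fix_iff]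
  constructor
  · intro h; exact tstep_inp_iff.mp h
  · intro h; exact tstep_inp_iff.mpr h

end
/-! ### Environment normal form -/

noncomputable section
open Classical

def baseEnvU (r : ℝ) : Env := (EngEnvN r 0 0 0).disjUnion (EngEnvN r 1 1 1)

def mkEnvF (r : ℝ) (f : {n // n ∈ (baseEnvU r).X} → ℝ) (g : {n // n ∈ (baseEnvU r).A} → ℝ) :
    Env := { baseEnvU r with xi_x := f, xi_u := g }

def mkEnv (r tL tR uL uR : ℝ) : Env :=
  mkEnvF r (fun n => if (n : ℕ) = 0 then tL else tR) (fun n => if (n : ℕ) = 0 then uL else uR)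

theorem mkEnvF_congr {r : ℝ} {f f' g g'} (hf : f = f') (hg : g = g') :
    mkEnvF r f g = mkEnvF r f' g' := by rw [hf, hg]

theorem AirplaneGen_env (r : ℝ) : (AirplaneGen r).env = mkEnv r 0 0 valOff valOff := by
  have h1 : (baseEnvU r).xi_x =
      (fun n : {n // n ∈ (baseEnvU r).X} => if (n : ℕ) = 0 then (0:ℝ) else (0:ℝ)) := by
    funext n; simp [baseEnvU, Env.disjUnion, glue, EngEnvN]
  have h2 : (baseEnvU r).xi_u =
      (fun n : {n // n ∈ (baseEnvU r).A} => if (n : ℕ) = 0 then valOff else valOff) := by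
    funext n; simp [baseEnvU, Env.disjUnion, glue, EngEnvN]
  calc (AirplaneGen r).env = mkEnvF r (baseEnvU r).xi_x (baseEnvU r).xi_u := rfl
    _ = mkEnv r 0 0 valOff valOff := mkEnvF_congr h1 h2

theorem updateAct_mkEnv0 (r tL tR uL uR v : ℝ) :
    updateAct (mkEnv r tL tR uL uR) 0 v = mkEnv r tL tR v uR := by
  calc updateAct (mkEnv r tL tR uL uR) 0 v
      = mkEnvF r (fun n => if (n : ℕ) = 0 then tL else tR)
          (fun b => if (b : ℕ) = 0 then v else if (b : ℕ) = 0 then uL else uR) := rfl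
    _ = mkEnv r tL tR v uR := mkEnvF_congr rfl (by
        funext b; by_cases hb : (b : ℕ) = 0 <;> simp [hb])

theorem updateAct_mkEnv1 (r tL tR uL uR v : ℝ) :
    updateAct (mkEnv r tL tR uL uR) 1 v = mkEnv r tL tR uL v := by
  calc updateAct (mkEnv r tL tR uL uR) 1 v
      = mkEnvF r (fun n => if (n : ℕ) = 0 then tL else tR)
          (fun b => if (b : ℕ) = 1 then v else if (b : ℕ) = 0 then uL else uR) := rfl
    _ = mkEnv r tL tR uL v := mkEnvF_congr rfl (by
        funext b
        have hb := b.2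
        simp only [baseEnvU, Env.disjUnion, EngEnvN, Finset.mem_union,
          Finset.mem_singleton] at hb
        rcases hb with hb | hb <;> simp [hb])

theorem invHolds_mkEnv {r tL tR uL uR : ℝ} :
    invHolds (mkEnv r tL tR uL uR) ↔ (0 ≤ tL ∧ tL ≤ 30) ∧ (0 ≤ tR ∧ tR ≤ 30) := by
  show ((EngEnvN r 0 0 0).inv _ ∧ (EngEnvN r 1 1 1).inv _) ↔ _
  constructor
  · rintro ⟨h1, h2⟩
    have e1 := h1 ⟨0, by simp [EngEnvN]⟩
    have e2 := h2 ⟨1, by simp [EngEnvN]⟩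
    simp [restrL, restrR, EngEnvN] at e1 e2
    exact ⟨e1, e2⟩
  · rintro ⟨h1, h2⟩
    constructor
    · intro y
      have hy : (y : ℕ) = 0 := Finset.mem_singleton.mp y.2
      simpa [restrL, EngEnvN, hy, mkEnv, mkEnvF] using h1
    · intro y
      have hy : (y : ℕ) = 1 := Finset.mem_singleton.mp y.2
      simpa [restrR, EngEnvN, hy, mkEnv, mkEnvF] using h2

theorem readSensor_mkEnv0 {r tL tR uL uR : ℝ} :
    readSensor (mkEnv r tL tR uL uR) 0 = Set.Icc (tL - engEps) (tL + engEps) := by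
  ext v
  constructor
  · rintro ⟨h, ξ, ⟨m1, hm1, m2, hm2, rfl⟩, rfl⟩
    have := hm1 ⟨0, by simp [EngEnvN]⟩ ⟨0, by simp [EngEnvN]⟩
    simp only [restrL, EngEnvN] at this hm1
    have hg : glue m1 m2 ⟨0, h⟩ = m1 ⟨0, by simp [EngEnvN]⟩ := by
      simp [glue, EngEnvN]
    refine (congrArg (· ∈ Set.Icc (tL - engEps) (tL + engEps)) hg).mpr ?_
    simpa [EngEnvN, mkEnv, mkEnvF] using hm1 ⟨0, by simp [EngEnvN]⟩ ⟨0, by simp [EngEnvN]⟩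
  · intro hv
    refine ⟨by simp [mkEnv, mkEnvF, baseEnvU, Env.disjUnion, EngEnvN], ?_⟩
    refine ⟨glue (fun _ => v) (fun _ => tR), ⟨fun _ => v, ?_, fun _ => tR, ?_, rfl⟩, ?_⟩
    · intro t y
      have hy : (y : ℕ) = 0 := Finset.mem_singleton.mp y.2
      simpa [restrL, EngEnvN, mkEnv, mkEnvF, hy] using hv
    · intro t y
      have hy : (y : ℕ) = 1 := Finset.mem_singleton.mp y.2
      constructor <;> simp [restrR, EngEnvN, mkEnv, mkEnvF, hy, engEps] <;> norm_num
    · simp [glue, EngEnvN]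
theorem readSensor_mkEnv1 {r tL tR uL uR : ℝ} :
    readSensor (mkEnv r tL tR uL uR) 1 = Set.Icc (tR - engEps) (tR + engEps) := by
  ext v
  constructor
  · rintro ⟨h, ξ, ⟨m1, hm1, m2, hm2, rfl⟩, rfl⟩
    have hg : glue m1 m2 ⟨1, h⟩ = m2 ⟨1, by simp [EngEnvN]⟩ := by
      simp [glue, EngEnvN]
    refine (congrArg (· ∈ Set.Icc (tR - engEps) (tR + engEps)) hg).mpr ?_
    simpa [restrR, EngEnvN, mkEnv, mkEnvF, baseEnvU, Env.disjUnion]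
      using hm2 ⟨1, by simp [EngEnvN]⟩ ⟨1, by simp [EngEnvN]⟩
  · intro hv
    refine ⟨by simp [mkEnv, mkEnvF, baseEnvU, Env.disjUnion, EngEnvN], ?_⟩
    refine ⟨glue (fun _ => tL) (fun _ => v), ⟨fun _ => tL, ?_, fun _ => v, ?_, rfl⟩, ?_⟩
    · intro t y
      have hy : (y : ℕ) = 0 := Finset.mem_singleton.mp y.2
      constructor <;> simp [restrL, EngEnvN, mkEnv, mkEnvF, hy, engEps] <;> norm_num
    · intro t y
      have hy : (y : ℕ) = 1 := Finset.mem_singleton.mp y.2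
      simpa [restrR, EngEnvN, mkEnv, mkEnvF, hy] using hv
    · simp [glue, EngEnvN]

theorem engHeat_off {r u : ℝ} (h : IsOff u) : engHeat r u = 1 := by
  simp [engHeat, not_lt.2 h]

theorem engHeat_on {r u : ℝ} (h : IsOn u) : engHeat r u = -r := by
  simp [engHeat, if_pos (show u < 0 from h)]

theorem mem_nextEnv_mkEnv {r tL tR uL uR : ℝ} {E' : Env} :
    E' ∈ nextEnv (mkEnv r tL tR uL uR) ↔
    ∃ γ1 ∈ Set.Icc (-engDelta) engDelta, ∃ γ2 ∈ Set.Icc (-engDelta) engDelta,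
      E' = mkEnv r (tL + engHeat r uL + γ1) (tR + engHeat r uR + γ2) uL uR := by
  constructor
  · rintro ⟨ξ, ⟨ξ1, ⟨γ1, hγ1, h1⟩, ξ2, ⟨γ2, hγ2, h2⟩, rfl⟩, rfl⟩
    refine ⟨γ1, hγ1, γ2, hγ2, ?_⟩
    have e1 : ∀ y, ξ1 y = tL + engHeat r uL + γ1 := by
      intro y
      have := h1 y ⟨0, by simp [EngEnvN]⟩
      have hy : (y : ℕ) = 0 := Finset.mem_singleton.mp y.2
      simpa [restrL, EngEnvN, mkEnv, mkEnvF, baseEnvU, Env.disjUnion, hy] using this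
    have e2 : ∀ y, ξ2 y = tR + engHeat r uR + γ2 := by
      intro y
      have := h2 y ⟨1, by simp [EngEnvN]⟩
      have hy : (y : ℕ) = 1 := Finset.mem_singleton.mp y.2
      simpa [restrR, EngEnvN, mkEnv, mkEnvF, baseEnvU, Env.disjUnion, hy] using this
    calc ({ mkEnv r tL tR uL uR with xi_x := glue ξ1 ξ2 } : Env)
        = mkEnvF r (glue ξ1 ξ2) (fun n => if (n : ℕ) = 0 then uL else uR) := rfl
      _ = mkEnv r (tL + engHeat r uL + γ1) (tR + engHeat r uR + γ2) uL uR := by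
          refine mkEnvF_congr ?_ rfl
          funext n
          by_cases hn : (n : ℕ) = 0
          · simp [glue, EngEnvN, hn, e1]; exact e1 _
          · simp [glue, EngEnvN, hn, e2]; exact e2 _
  · rintro ⟨γ1, hγ1, γ2, hγ2, rfl⟩
    refine ⟨_, ⟨fun _ => tL + engHeat r uL + γ1, ⟨γ1, hγ1, ?_⟩,
      fun _ => tR + engHeat r uR + γ2, ⟨γ2, hγ2, ?_⟩, rfl⟩, ?_⟩
    · intro y u
      have hy : (y : ℕ) = 0 := Finset.mem_singleton.mp y.2
      have hu : (u : ℕ) = 0 := Finset.mem_singleton.mp u.2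
      simp [restrL, EngEnvN, mkEnv, mkEnvF, baseEnvU, Env.disjUnion, hy, hu]
    · intro y u
      have hy : (y : ℕ) = 1 := Finset.mem_singleton.mp y.2
      have hu : (u : ℕ) = 1 := Finset.mem_singleton.mp u.2
      simp [restrR, EngEnvN, mkEnv, mkEnvF, baseEnvU, Env.disjUnion, hy, hu]
    · symm
      calc ({ mkEnv r tL tR uL uR with
            xi_x := glue (fun _ => tL + engHeat r uL + γ1) (fun _ => tR + engHeat r uR + γ2) } : Env)
          = mkEnvF r (glue (fun _ => tL + engHeat r uL + γ1) (fun _ => tR + engHeat r uR + γ2))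
              (fun n => if (n : ℕ) = 0 then uL else uR) := rfl
        _ = _ := by
            refine mkEnvF_congr ?_ rfl
            funext n
            by_cases hn : (n : ℕ) = 0 <;> simp [glue, EngEnvN, hn]
/-! ### Abstract engine states -/

inductive ESt : Type
  | rd | tk | wOn | yfix | cl (k : ℕ) | wOff

def eProc (ID : Val) (a : ℕ) : ESt → Proc
  | .rd => CtrlN ID a a
  | .tk => .tick (CtrlN ID a a)
  | .wOn => WOn ID a a
  | .yfix => YFix ID a a
  | .cl k => Proc.ticks k (RdY ID a a)
  | .wOff => WOff ID a a

def eCoolOK : ESt → ℝ → Prop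
  | .rd, u => IsOff u
  | .tk, u => IsOff u
  | .wOn, u => IsOff u
  | .yfix, u => IsOn u
  | .cl _, u => IsOn u
  | .wOff, u => IsOn u

def eTempOK : ESt → ℝ → Prop
  | .rd, t => 0 ≤ t ∧ t ≤ 11.5
  | .tk, t => 0 ≤ t ∧ t ≤ 10.1
  | .wOn, t => 9.9 < t ∧ t ≤ 11.5
  | .yfix, t => 9.9 < t ∧ t ≤ 11.5
  | .cl k, t => k ≤ 4 ∧ 9.9 - 1.4 * (5 - (k:ℝ)) < t ∧ t ≤ 11.5 - 0.4 * (5 - (k:ℝ))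
  | .wOff, t => 2.9 < t ∧ t ≤ 9.5

/-- Untimed transitions of the abstract engine states. -/
theorem ustep_eProc_inv {ID : Val} {a : ℕ} {e : ESt} {l Q}
    (h : UStep (eProc ID a e) l Q) :
    (e = .rd ∧ ∃ v, l = .read a v ∧
        Q = (if 10 < v then eProc ID a .wOn else eProc ID a .tk)) ∨
    (e = .cl 0 ∧ ∃ v, l = .read a v ∧
        Q = (if 10 < v then prefOut warningCh ID (YFix ID a a) else eProc ID a .wOff)) ∨
    (e = .wOn ∧ l = .write a valOn ∧ Q = eProc ID a .yfix) ∨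
    (e = .wOff ∧ l = .write a valOff ∧ Q = eProc ID a .tk) := by
  cases e with
  | rd =>
      obtain ⟨v, hl, hQ⟩ := ustep_CtrlN_iff.mp h
      exact Or.inl ⟨rfl, v, hl, hQ⟩
  | tk => exact absurd h ustep_tick_no
  | wOn =>
      obtain ⟨hl, hQ⟩ := ustep_WOn_iff.mp h
      exact Or.inr (Or.inr (Or.inl ⟨rfl, hl, hQ⟩))
  | yfix => exact absurd h ustep_YFix_no
  | cl k =>
      cases k with
      | zero =>
          obtain ⟨v, hl, hQ⟩ := ustep_RdY_iff.mp h
          refine Or.inr (Or.inl ⟨rfl, v, hl, ?_⟩)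
          simpa [eProc, WOff] using hQ
      | succ k => exact absurd h ustep_ticksSucc_no
  | wOff =>
      obtain ⟨hl, hQ⟩ := ustep_WOff_iff.mp h
      exact Or.inr (Or.inr (Or.inr ⟨rfl, hl, hQ⟩))

/-- Quiet states: no untimed transitions. -/
def EQuiet : ESt → Prop
  | .tk => True
  | .yfix => True
  | .cl (_+1) => True
  | _ => False

theorem ustep_eProc_quiet {ID : Val} {a : ℕ} {e : ESt} (he : EQuiet e) {l Q} :
    ¬ UStep (eProc ID a e) l Q := by
  intro h
  rcases ustep_eProc_inv h with ⟨rfl, -⟩ | ⟨rfl, -⟩ | ⟨rfl, -⟩ | ⟨rfl, -⟩ <;>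
    simp [EQuiet] at he

/-- Timed transitions of quiet states. -/
theorem tstep_eProc_quiet {ID : Val} {a : ℕ} {e : ESt} (he : EQuiet e) {Q}
    (h : TStep (eProc ID a e) Q) :
    (e = .tk ∧ Q = eProc ID a .rd) ∨
    (e = .yfix ∧ Q = eProc ID a (.cl 4)) ∨
    (∃ k, e = .cl (k+1) ∧ Q = eProc ID a (.cl k)) := by
  cases e with
  | tk => exact Or.inl ⟨rfl, tstep_tick_iff.mp h⟩
  | yfix => exact Or.inr (Or.inl ⟨rfl, tstep_YFix_iff.mp h⟩)
  | cl k =>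
      cases k with
      | zero => simp [EQuiet] at he
      | succ k => exact Or.inr (Or.inr ⟨k, rfl, tstep_ticksSucc_iff.mp h⟩)
  | rd => simp [EQuiet] at he
  | wOn => simp [EQuiet] at he
  | wOff => simp [EQuiet] at he

theorem label_read_facts {a : ℕ} {v : Val} :
    (∀ c w, Label.read a v ≠ .inp c w ∧ Label.read a v ≠ .out c w) ∧
      Label.read a v ≠ .tick ∧ Label.read a v ≠ .tau := by
  refine ⟨fun c w => ⟨nofun, nofun⟩, nofun, nofun⟩

theorem label_write_facts {a : ℕ} {v : Val} :
    (∀ c w, Label.write a v ≠ .inp c w ∧ Label.write a v ≠ .out c w) ∧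
      Label.write a v ≠ .tick ∧ Label.write a v ≠ .tau := by
  refine ⟨fun c w => ⟨nofun, nofun⟩, nofun, nofun⟩

/-! ### The global process shape -/

def GP (pL pR : Proc) : Proc := .res (.par (.par pL pR) Check) warningCh

theorem ustep_par_inv {P Q l R} (h : UStep (.par P Q) l R) :
    (∃ P', UStep P l P' ∧ R = .par P' Q) ∨
    (∃ Q', UStep Q l Q' ∧ R = .par P Q') ∨
    (l = .tau ∧ ∃ c v P' Q',
      ((UStep P (.out c v) P' ∧ UStep Q (.inp c v) Q') ∨
       (UStep P (.inp c v) P' ∧ UStep Q (.out c v) Q')) ∧ R = .par P' Q') := by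
  cases h with
  | comL h1 h2 => exact Or.inr (Or.inr ⟨rfl, _, _, _, _, Or.inl ⟨h1, h2⟩, rfl⟩)
  | comR h1 h2 => exact Or.inr (Or.inr ⟨rfl, _, _, _, _, Or.inr ⟨h1, h2⟩, rfl⟩)
  | parL h1 _ => exact Or.inl ⟨_, h1, rfl⟩
  | parR h1 _ => exact Or.inr (Or.inl ⟨_, h1, rfl⟩)

theorem ustep_res_inv {P c l R} (h : UStep (.res P c) l R) :
    ∃ P', UStep P l P' ∧ R = .res P' c ∧ ∀ v, l ≠ .inp c v ∧ l ≠ .out c v := by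
  cases h with
  | res h1 h2 => exact ⟨_, h1, rfl, h2⟩

/-- eProc states never perform out/inp/tau untimed labels. -/
theorem eProc_no_out {ID a e c v Q} (h : UStep (eProc ID a e) (.out c v) Q) : False := by
  rcases ustep_eProc_inv h with ⟨-, v, hl, -⟩ | ⟨-, v, hl, -⟩ | ⟨-, hl, -⟩ | ⟨-, hl, -⟩ <;>
    exact nomatch hl

theorem eProc_no_inp {ID a e c v Q} (h : UStep (eProc ID a e) (.inp c v) Q) : False := by
  rcases ustep_eProc_inv h with ⟨-, v, hl, -⟩ | ⟨-, v, hl, -⟩ | ⟨-, hl, -⟩ | ⟨-, hl, -⟩ <;>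
    exact nomatch hl

theorem eProc_no_tau {ID a e Q} (h : UStep (eProc ID a e) .tau Q) : False := by
  rcases ustep_eProc_inv h with ⟨-, v, hl, -⟩ | ⟨-, v, hl, -⟩ | ⟨-, hl, -⟩ | ⟨-, hl, -⟩ <;>
    exact nomatch hl

/-- Inversion of untimed steps of the global process. -/
theorem ustep_GP_inv {eL eR : ESt} {l R}
    (h : UStep (GP (eProc idL 0 eL) (eProc idR 1 eR)) l R) :
    (∃ pL', UStep (eProc idL 0 eL) l pL' ∧ R = GP pL' (eProc idR 1 eR)) ∨
    (∃ pR', UStep (eProc idR 1 eR) l pR' ∧ R = GP (eProc idL 0 eL) pR') := by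
  obtain ⟨P', hP, rfl, hres⟩ := ustep_res_inv h
  rcases ustep_par_inv hP with ⟨P1, h1, rfl⟩ | ⟨Q1, h1, rfl⟩ |
      ⟨rfl, c, v, P1, Q1, hcom, rfl⟩
  · rcases ustep_par_inv h1 with ⟨P2, h2, rfl⟩ | ⟨Q2, h2, rfl⟩ |
        ⟨rfl, c, v, P2, Q2, hcom, rfl⟩
    · exact Or.inl ⟨P2, h2, rfl⟩
    · exact Or.inr ⟨Q2, h2, rfl⟩
    · rcases hcom with ⟨hc, -⟩ | ⟨hc, -⟩
      · exact absurd hc eProc_no_out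
      · exact absurd hc eProc_no_inp
  · obtain ⟨v, hl⟩ := ustep_Check_label h1
    subst hl
    exact absurd (hres v).1 (by simp)
  · rcases hcom with ⟨hc, -⟩ | ⟨-, hc⟩
    · rcases ustep_par_inv hc with ⟨P2, h2, -⟩ | ⟨Q2, h2, -⟩ | ⟨hl, -⟩
      · exact absurd h2 eProc_no_out
      · exact absurd h2 eProc_no_out
      · exact nomatch hl
    · obtain ⟨w, hl⟩ := ustep_Check_label hc
      exact nomatch hl
/-! ### The invariant -/

def GoodS (r : ℝ) (M : CPS) : Prop :=
  ∃ eL eR tL tR uL uR,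
    M.proc = GP (eProc idL 0 eL) (eProc idR 1 eR) ∧
    M.env = mkEnv r tL tR uL uR ∧
    eTempOK eL tL ∧ eTempOK eR tR ∧ eCoolOK eL uL ∧ eCoolOK eR uR

theorem eTempOK_inv {e : ESt} {t : ℝ} (h : eTempOK e t) : 0 ≤ t ∧ t ≤ 30 := by
  cases e with
  | cl k =>
      obtain ⟨hk, h1, h2⟩ := h
      have hk' : (k : ℝ) ≤ 4 := by exact_mod_cast hk
      have hk0 : (0:ℝ) ≤ (k : ℝ) := Nat.cast_nonneg k
      constructor <;> nlinarith
  | rd => obtain ⟨h1, h2⟩ := h; constructor <;> linarith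
  | tk => obtain ⟨h1, h2⟩ := h; constructor <;> linarith
  | wOn => obtain ⟨h1, h2⟩ := h; constructor <;> linarith
  | yfix => obtain ⟨h1, h2⟩ := h; constructor <;> linarith
  | wOff => obtain ⟨h1, h2⟩ := h; constructor <;> linarith

theorem invHolds_of_good {r tL tR uL uR} {eL eR : ESt}
    (htL : eTempOK eL tL) (htR : eTempOK eR tR) :
    invHolds (mkEnv r tL tR uL uR) :=
  invHolds_mkEnv.mpr ⟨eTempOK_inv htL, eTempOK_inv htR⟩

theorem cstepu_good {r : ℝ} {M M' : CPS} {α : Label}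
    (hG : GoodS r M) (h : CStepU M α M') : α = .tau ∧ GoodS r M' := by
  obtain ⟨E, P⟩ := M
  obtain ⟨eL, eR, tL, tR, uL, uR, hp, he, htL, htR, huL, huR⟩ := hG
  simp only at hp he
  subst hp he
  cases h with
  | out hU _ =>
      rcases ustep_GP_inv hU with ⟨pL', hL, -⟩ | ⟨pR', hR, -⟩
      · exact absurd hL eProc_no_out
      · exact absurd hR eProc_no_out
  | inp hU _ =>
      rcases ustep_GP_inv hU with ⟨pL', hL, -⟩ | ⟨pR', hR, -⟩
      · exact absurd hL eProc_no_inp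
      · exact absurd hR eProc_no_inp
  | tau hU _ =>
      rcases ustep_GP_inv hU with ⟨pL', hL, -⟩ | ⟨pR', hR, -⟩
      · exact absurd hL eProc_no_tau
      · exact absurd hR eProc_no_tau
  | sensRead hU _ hv =>
      refine ⟨rfl, ?_⟩
      rcases ustep_GP_inv hU with ⟨pL', hL, rfl⟩ | ⟨pR', hR, rfl⟩
      · rcases ustep_eProc_inv hL with ⟨rfl, w, hl, hQ⟩ | ⟨rfl, w, hl, hQ⟩ |
            ⟨rfl, hl, -⟩ | ⟨rfl, hl, -⟩
        · cases hl
          rw [readSensor_mkEnv0, Set.mem_Icc] at hv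
          obtain ⟨hv1, hv2⟩ := hv
          norm_num [engEps] at hv1 hv2
          obtain ⟨ht1, ht2⟩ := htL
          split at hQ
          · subst hQ
            exact ⟨.wOn, eR, tL, tR, uL, uR, rfl, rfl,
              ⟨by linarith, ht2⟩, htR, huL, huR⟩
          · subst hQ
            exact ⟨.tk, eR, tL, tR, uL, uR, rfl, rfl,
              ⟨ht1, by linarith⟩, htR, huL, huR⟩
        · cases hl
          rw [readSensor_mkEnv0, Set.mem_Icc] at hv
          obtain ⟨hv1, hv2⟩ := hv
          norm_num [engEps] at hv1 hv2
          obtain ⟨-, ht1, ht2⟩ := htL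
          norm_num at ht1 ht2
          split at hQ
          · exact absurd hQ (by intro _; linarith)
          · subst hQ
            exact ⟨.wOff, eR, tL, tR, uL, uR, rfl, rfl,
              ⟨by linarith, by linarith⟩, htR, huL, huR⟩
        · exact nomatch hl
        · exact nomatch hl
      · rcases ustep_eProc_inv hR with ⟨rfl, w, hl, hQ⟩ | ⟨rfl, w, hl, hQ⟩ |
            ⟨rfl, hl, -⟩ | ⟨rfl, hl, -⟩
        · cases hl
          rw [readSensor_mkEnv1, Set.mem_Icc] at hv
          obtain ⟨hv1, hv2⟩ := hv
          norm_num [engEps] at hv1 hv2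
          obtain ⟨ht1, ht2⟩ := htR
          split at hQ
          · subst hQ
            exact ⟨eL, .wOn, tL, tR, uL, uR, rfl, rfl,
              htL, ⟨by linarith, ht2⟩, huL, huR⟩
          · subst hQ
            exact ⟨eL, .tk, tL, tR, uL, uR, rfl, rfl,
              htL, ⟨ht1, by linarith⟩, huL, huR⟩
        · cases hl
          rw [readSensor_mkEnv1, Set.mem_Icc] at hv
          obtain ⟨hv1, hv2⟩ := hv
          norm_num [engEps] at hv1 hv2
          obtain ⟨-, ht1, ht2⟩ := htR
          norm_num at ht1 ht2
          split at hQ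
          · exact absurd hQ (by intro _; linarith)
          · subst hQ
            exact ⟨eL, .wOff, tL, tR, uL, uR, rfl, rfl,
              htL, ⟨by linarith, by linarith⟩, huL, huR⟩
        · exact nomatch hl
        · exact nomatch hl
  | actWrite hU _ =>
      refine ⟨rfl, ?_⟩
      rcases ustep_GP_inv hU with ⟨pL', hL, rfl⟩ | ⟨pR', hR, rfl⟩
      · rcases ustep_eProc_inv hL with ⟨rfl, w, hl, -⟩ | ⟨rfl, w, hl, -⟩ |
            ⟨rfl, hl, hQ⟩ | ⟨rfl, hl, hQ⟩
        · exact nomatch hl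
        · exact nomatch hl
        · cases hl; subst hQ
          rw [updateAct_mkEnv0]
          exact ⟨.yfix, eR, tL, tR, valOn, uR, rfl, rfl, htL, htR,
            by norm_num [eCoolOK, IsOn, valOn], huR⟩
        · cases hl; subst hQ
          rw [updateAct_mkEnv0]
          obtain ⟨ht1, ht2⟩ := htL
          exact ⟨.tk, eR, tL, tR, valOff, uR, rfl, rfl,
            ⟨by linarith, by linarith⟩, htR,
            by norm_num [eCoolOK, IsOff, valOff], huR⟩
      · rcases ustep_eProc_inv hR with ⟨rfl, w, hl, -⟩ | ⟨rfl, w, hl, -⟩ |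
            ⟨rfl, hl, hQ⟩ | ⟨rfl, hl, hQ⟩
        · exact nomatch hl
        · exact nomatch hl
        · cases hl; subst hQ
          rw [updateAct_mkEnv1]
          exact ⟨eL, .yfix, tL, tR, uL, valOn, rfl, rfl, htL, htR, huL,
            by norm_num [eCoolOK, IsOn, valOn]⟩
        · cases hl; subst hQ
          rw [updateAct_mkEnv1]
          obtain ⟨ht1, ht2⟩ := htR
          exact ⟨eL, .tk, tL, tR, uL, valOff, rfl, rfl, htL,
            ⟨by linarith, by linarith⟩, huL,
            by norm_num [eCoolOK, IsOff, valOff]⟩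
/-! ### Tick transitions -/

theorem ustep_GP_L {pL pR l pL'} (h : UStep pL l pL')
    (h1 : ∀ v, l ≠ .inp warningCh v ∧ l ≠ .out warningCh v) (h2 : l ≠ .tick) :
    UStep (GP pL pR) l (GP pL' pR) := .res (.parL (.parL h h2) h2) h1

theorem ustep_GP_R {pL pR l pR'} (h : UStep pR l pR')
    (h1 : ∀ v, l ≠ .inp warningCh v ∧ l ≠ .out warningCh v) (h2 : l ≠ .tick) :
    UStep (GP pL pR) l (GP pL pR') := .res (.parL (.parR h h2) h2) h1

theorem self_mem_read {t : ℝ} : t ∈ Set.Icc (t - engEps) (t + engEps) := by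
  constructor <;> norm_num [engEps]

theorem noisy_tau_L {r tL tR uL uR} {eL eR : ESt} (hne : ¬ EQuiet eL)
    (htL : eTempOK eL tL) (htR : eTempOK eR tR) :
    ∃ N', CStepU ⟨mkEnv r tL tR uL uR, GP (eProc idL 0 eL) (eProc idR 1 eR)⟩ .tau N' := by
  have hinv : invHolds (mkEnv r tL tR uL uR) := invHolds_of_good htL htR
  cases eL with
  | tk => exact absurd trivial hne
  | yfix => exact absurd trivial hne
  | rd =>
      refine ⟨_, CStepU.sensRead (ustep_GP_L (ustep_CtrlN_iff.mpr ⟨tL, rfl, rfl⟩)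
        (fun _ => ⟨nofun, nofun⟩) nofun) hinv ?_⟩
      rw [readSensor_mkEnv0]; exact self_mem_read
  | cl k =>
      cases k with
      | zero =>
          refine ⟨_, CStepU.sensRead (ustep_GP_L (ustep_RdY_iff.mpr ⟨tL, rfl, rfl⟩)
            (fun _ => ⟨nofun, nofun⟩) nofun) hinv ?_⟩
          rw [readSensor_mkEnv0]; exact self_mem_read
      | succ k => exact absurd trivial hne
  | wOn =>
      exact ⟨_, CStepU.actWrite (ustep_GP_L (ustep_WOn_iff.mpr ⟨rfl, rfl⟩)
        (fun _ => ⟨nofun, nofun⟩) nofun) hinv⟩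
  | wOff =>
      exact ⟨_, CStepU.actWrite (ustep_GP_L (ustep_WOff_iff.mpr ⟨rfl, rfl⟩)
        (fun _ => ⟨nofun, nofun⟩) nofun) hinv⟩

theorem noisy_tau_R {r tL tR uL uR} {eL eR : ESt} (hne : ¬ EQuiet eR)
    (htL : eTempOK eL tL) (htR : eTempOK eR tR) :
    ∃ N', CStepU ⟨mkEnv r tL tR uL uR, GP (eProc idL 0 eL) (eProc idR 1 eR)⟩ .tau N' := by
  have hinv : invHolds (mkEnv r tL tR uL uR) := invHolds_of_good htL htR
  cases eR with
  | tk => exact absurd trivial hne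
  | yfix => exact absurd trivial hne
  | rd =>
      refine ⟨_, CStepU.sensRead (ustep_GP_R (ustep_CtrlN_iff.mpr ⟨tR, rfl, rfl⟩)
        (fun _ => ⟨nofun, nofun⟩) nofun) hinv ?_⟩
      rw [readSensor_mkEnv1]; exact self_mem_read
  | cl k =>
      cases k with
      | zero =>
          refine ⟨_, CStepU.sensRead (ustep_GP_R (ustep_RdY_iff.mpr ⟨tR, rfl, rfl⟩)
            (fun _ => ⟨nofun, nofun⟩) nofun) hinv ?_⟩
          rw [readSensor_mkEnv1]; exact self_mem_read
      | succ k => exact absurd trivial hne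
  | wOn =>
      exact ⟨_, CStepU.actWrite (ustep_GP_R (ustep_WOn_iff.mpr ⟨rfl, rfl⟩)
        (fun _ => ⟨nofun, nofun⟩) nofun) hinv⟩
  | wOff =>
      exact ⟨_, CStepU.actWrite (ustep_GP_R (ustep_WOff_iff.mpr ⟨rfl, rfl⟩)
        (fun _ => ⟨nofun, nofun⟩) nofun) hinv⟩

def qnext : ESt → ESt
  | .tk => .rd
  | .yfix => .cl 4
  | .cl (k+1) => .cl k
  | e => e

theorem tstep_eProc_quiet_mk {ID : Val} {a : ℕ} {e : ESt} (he : EQuiet e) :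
    TStep (eProc ID a e) (eProc ID a (qnext e)) := by
  cases e with
  | tk => exact .delay
  | yfix => exact tstep_YFix_iff.mpr rfl
  | cl k =>
      cases k with
      | zero => simp [EQuiet] at he
      | succ k => exact tstep_ticksSucc_iff.mpr rfl
  | rd => simp [EQuiet] at he
  | wOn => simp [EQuiet] at he
  | wOff => simp [EQuiet] at he

theorem tstep_eProc_quiet_eq {ID : Val} {a : ℕ} {e : ESt} (he : EQuiet e) {Q}
    (h : TStep (eProc ID a e) Q) : Q = eProc ID a (qnext e) := by
  rcases tstep_eProc_quiet he h with ⟨rfl, hQ⟩ | ⟨rfl, hQ⟩ | ⟨k, rfl, hQ⟩ <;>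
    simpa [qnext] using hQ

theorem no_ptau_pair {eL eR : ESt} (hL : EQuiet eL) (hR : EQuiet eR) :
    ∀ R, ¬ UStep (.par (eProc idL 0 eL) (eProc idR 1 eR)) .tau R := by
  intro R h
  rcases ustep_par_inv h with ⟨_, h1, -⟩ | ⟨_, h1, -⟩ | ⟨-, c, v, _, _, hcom, -⟩
  · exact ustep_eProc_quiet hL h1
  · exact ustep_eProc_quiet hR h1
  · rcases hcom with ⟨h1, -⟩ | ⟨h1, -⟩ <;> exact ustep_eProc_quiet hL h1

theorem no_ptau_all {eL eR : ESt} (hL : EQuiet eL) (hR : EQuiet eR) :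
    ∀ R, ¬ UStep (.par (.par (eProc idL 0 eL) (eProc idR 1 eR)) Check) .tau R := by
  intro R h
  rcases ustep_par_inv h with ⟨_, h1, -⟩ | ⟨_, h1, -⟩ | ⟨-, c, v, _, _, hcom, -⟩
  · exact no_ptau_pair hL hR _ h1
  · obtain ⟨v, hl⟩ := ustep_Check_label h1; exact nomatch hl
  · rcases hcom with ⟨h1, -⟩ | ⟨-, h1⟩
    · rcases ustep_par_inv h1 with ⟨_, h2, -⟩ | ⟨_, h2, -⟩ | ⟨hl, -⟩
      · exact ustep_eProc_quiet hL h2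
      · exact ustep_eProc_quiet hR h2
      · exact nomatch hl
    · obtain ⟨w, hl⟩ := ustep_Check_label h1; exact nomatch hl

theorem tstep_GP_quiet {eL eR : ESt} (hL : EQuiet eL) (hR : EQuiet eR) :
    TStep (GP (eProc idL 0 eL) (eProc idR 1 eR))
      (GP (eProc idL 0 (qnext eL)) (eProc idR 1 (qnext eR))) :=
  .res (.timePar (.timePar (tstep_eProc_quiet_mk hL) (tstep_eProc_quiet_mk hR)
    (no_ptau_pair hL hR)) (tstep_Check_iff.mpr rfl) (no_ptau_all hL hR))

theorem no_tau_quiet {eL eR : ESt} (hL : EQuiet eL) (hR : EQuiet eR) {E : Env} :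
    ∀ N', ¬ CStepU ⟨E, GP (eProc idL 0 eL) (eProc idR 1 eR)⟩ .tau N' := by
  intro N' h
  cases h with
  | sensRead hU _ _ =>
      rcases ustep_GP_inv hU with ⟨_, h1, -⟩ | ⟨_, h1, -⟩
      · exact ustep_eProc_quiet hL h1
      · exact ustep_eProc_quiet hR h1
  | actWrite hU _ =>
      rcases ustep_GP_inv hU with ⟨_, h1, -⟩ | ⟨_, h1, -⟩
      · exact ustep_eProc_quiet hL h1
      · exact ustep_eProc_quiet hR h1
  | tau hU _ =>
      rcases ustep_GP_inv hU with ⟨_, h1, -⟩ | ⟨_, h1, -⟩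
      · exact ustep_eProc_quiet hL h1
      · exact ustep_eProc_quiet hR h1

theorem tstep_res_inv {P c Q} (h : TStep (.res P c) Q) :
    ∃ P', TStep P P' ∧ Q = .res P' c := by
  cases h with
  | res h1 => exact ⟨_, h1, rfl⟩

theorem tstep_par_inv {P Q R} (h : TStep (.par P Q) R) :
    ∃ P' Q', TStep P P' ∧ TStep Q Q' ∧ R = .par P' Q' := by
  cases h with
  | timePar h1 h2 _ => exact ⟨_, _, h1, h2, rfl⟩

theorem quiet_next_ok {r t u γ : ℝ} {e : ESt} (hr8 : 0.8 ≤ r) (hr1 : r ≤ 1)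
    (he : EQuiet e) (ht : eTempOK e t) (hu : eCoolOK e u)
    (hγl : -engDelta ≤ γ) (hγr : γ ≤ engDelta) :
    eTempOK (qnext e) (t + engHeat r u + γ) ∧ eCoolOK (qnext e) u := by
  norm_num [engDelta] at hγl hγr
  cases e with
  | tk =>
      obtain ⟨h1, h2⟩ := ht
      rw [show engHeat r u = 1 from engHeat_off hu]
      exact ⟨⟨by linarith, by linarith⟩, hu⟩
  | yfix =>
      obtain ⟨h1, h2⟩ := ht
      rw [show engHeat r u = -r from engHeat_on hu]
      refine ⟨⟨by norm_num, ?_, ?_⟩, hu⟩ <;> push_cast <;> [linarith; linarith]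
  | cl k =>
      cases k with
      | zero => simp [EQuiet] at he
      | succ k =>
          obtain ⟨hk, h1, h2⟩ := ht
          rw [show engHeat r u = -r from engHeat_on hu]
          push_cast at h1 h2
          refine ⟨⟨by omega, ?_, ?_⟩, hu⟩ <;> push_cast <;> [linarith; linarith]
  | rd => simp [EQuiet] at he
  | wOn => simp [EQuiet] at he
  | wOff => simp [EQuiet] at he

theorem cstep_tick_good {r : ℝ} {M M' : CPS} (hr8 : 0.8 ≤ r) (hr1 : r ≤ 1)
    (hG : GoodS r M) (h : CStep M .tick M') : GoodS r M' := by
  obtain ⟨E, P⟩ := M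
  obtain ⟨eL, eR, tL, tR, uL, uR, hp, he, htL, htR, huL, huR⟩ := hG
  simp only at hp he
  subst hp he
  obtain ⟨hT, hnoτ, hinv, hnext⟩ := h
  by_cases hqL : EQuiet eL
  · by_cases hqR : EQuiet eR
    · simp only at hT hnext
      obtain ⟨P1, hP1, hres⟩ := tstep_res_inv hT
      obtain ⟨P2, P3, hP2, hP3, rfl⟩ := tstep_par_inv hP1
      obtain ⟨P4, P5, hP4, hP5, rfl⟩ := tstep_par_inv hP2
      rw [tstep_eProc_quiet_eq hqL hP4] at hres
      rw [tstep_eProc_quiet_eq hqR hP5] at hres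
      rw [tstep_Check_iff] at hP3
      subst hP3
      rw [mem_nextEnv_mkEnv] at hnext
      obtain ⟨γ1, hγ1, γ2, hγ2, hE'⟩ := hnext
      obtain ⟨htL', huL'⟩ := quiet_next_ok hr8 hr1 hqL htL huL hγ1.1 hγ1.2
      obtain ⟨htR', huR'⟩ := quiet_next_ok hr8 hr1 hqR htR huR hγ2.1 hγ2.2
      exact ⟨qnext eL, qnext eR, _, _, uL, uR, hres, hE', htL', htR', huL', huR'⟩
    · obtain ⟨N', hτ⟩ := noisy_tau_R (r:=r) (uL:=uL) (uR:=uR) hqR htL htR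
      exact absurd hτ (hnoτ N')
  · obtain ⟨N', hτ⟩ := noisy_tau_L (r:=r) (uL:=uL) (uR:=uR) hqL htL htR
    exact absurd hτ (hnoτ N')
/-! ### Weak tick availability -/

theorem write_step_L {r tL tR uL uR : ℝ} {eR : ESt} {e e' : ESt} {w : ℝ}
    (hU : UStep (eProc idL 0 e) (.write 0 w) (eProc idL 0 e'))
    (hinv : invHolds (mkEnv r tL tR uL uR)) :
    CStepU ⟨mkEnv r tL tR uL uR, GP (eProc idL 0 e) (eProc idR 1 eR)⟩ .tau
      ⟨mkEnv r tL tR w uR, GP (eProc idL 0 e') (eProc idR 1 eR)⟩ := by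
  have h := CStepU.actWrite (E := mkEnv r tL tR uL uR)
    (ustep_GP_L (pR := eProc idR 1 eR) hU (fun _ => ⟨nofun, nofun⟩) nofun) hinv
  rwa [updateAct_mkEnv0] at h

theorem write_step_R {r tL tR uL uR : ℝ} {eL : ESt} {e e' : ESt} {w : ℝ}
    (hU : UStep (eProc idR 1 e) (.write 1 w) (eProc idR 1 e'))
    (hinv : invHolds (mkEnv r tL tR uL uR)) :
    CStepU ⟨mkEnv r tL tR uL uR, GP (eProc idL 0 eL) (eProc idR 1 e)⟩ .tau
      ⟨mkEnv r tL tR uL w, GP (eProc idL 0 eL) (eProc idR 1 e')⟩ := by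
  have h := CStepU.actWrite (E := mkEnv r tL tR uL uR)
    (ustep_GP_R (pL := eProc idL 0 eL) hU (fun _ => ⟨nofun, nofun⟩) nofun) hinv
  rwa [updateAct_mkEnv1] at h


theorem drive_L {r tL tR uL uR : ℝ} {eL eR : ESt}
    (htL : eTempOK eL tL) (htR : eTempOK eR tR) (huL : eCoolOK eL uL) :
    ∃ eL' uL', EQuiet eL' ∧ eTempOK eL' tL ∧ eCoolOK eL' uL' ∧
      WeakTau ⟨mkEnv r tL tR uL uR, GP (eProc idL 0 eL) (eProc idR 1 eR)⟩
        ⟨mkEnv r tL tR uL' uR, GP (eProc idL 0 eL') (eProc idR 1 eR)⟩ := by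
  have hinv : invHolds (mkEnv r tL tR uL uR) := invHolds_of_good htL htR
  cases eL with
  | tk => exact ⟨.tk, uL, trivial, htL, huL, .refl⟩
  | yfix => exact ⟨.yfix, uL, trivial, htL, huL, .refl⟩
  | rd =>
      obtain ⟨ht1, ht2⟩ := htL
      by_cases h10 : 10 < tL
      · have s1 : CStepU ⟨mkEnv r tL tR uL uR, GP (eProc idL 0 .rd) (eProc idR 1 eR)⟩
            .tau ⟨mkEnv r tL tR uL uR, GP (eProc idL 0 .wOn) (eProc idR 1 eR)⟩ := by
          refine CStepU.sensRead (ustep_GP_L (ustep_CtrlN_iff.mpr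
            ⟨tL, rfl, (if_pos h10).symm⟩) (fun _ => ⟨nofun, nofun⟩) nofun) hinv ?_
          rw [readSensor_mkEnv0]; exact self_mem_read
        have s2 : CStepU ⟨mkEnv r tL tR uL uR, GP (eProc idL 0 .wOn) (eProc idR 1 eR)⟩
            .tau ⟨mkEnv r tL tR valOn uR, GP (eProc idL 0 .yfix) (eProc idR 1 eR)⟩ := by
          exact write_step_L ((ustep_WOn_iff (ID := idL) (a := 0) (s := 0)).mpr ⟨rfl, rfl⟩) hinv
        exact ⟨.yfix, valOn, trivial, ⟨by linarith, ht2⟩,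
          by norm_num [eCoolOK, IsOn, valOn],
          Relation.ReflTransGen.head s1 (Relation.ReflTransGen.single s2)⟩
      · push_neg at h10
        have s1 : CStepU ⟨mkEnv r tL tR uL uR, GP (eProc idL 0 .rd) (eProc idR 1 eR)⟩
            .tau ⟨mkEnv r tL tR uL uR, GP (eProc idL 0 .tk) (eProc idR 1 eR)⟩ := by
          refine CStepU.sensRead (ustep_GP_L (ustep_CtrlN_iff.mpr
            ⟨tL, rfl, (if_neg (not_lt.mpr h10)).symm⟩) (fun _ => ⟨nofun, nofun⟩) nofun) hinv ?_
          rw [readSensor_mkEnv0]; exact self_mem_read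
        exact ⟨.tk, uL, trivial, ⟨ht1, by linarith⟩, huL,
          Relation.ReflTransGen.single s1⟩
  | wOn =>
      have s2 : CStepU ⟨mkEnv r tL tR uL uR, GP (eProc idL 0 .wOn) (eProc idR 1 eR)⟩
          .tau ⟨mkEnv r tL tR valOn uR, GP (eProc idL 0 .yfix) (eProc idR 1 eR)⟩ := by
        exact write_step_L ((ustep_WOn_iff (ID := idL) (a := 0) (s := 0)).mpr ⟨rfl, rfl⟩) hinv
      exact ⟨.yfix, valOn, trivial, htL, by norm_num [eCoolOK, IsOn, valOn],
        Relation.ReflTransGen.single s2⟩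
  | wOff =>
      obtain ⟨ht1, ht2⟩ := htL
      have s2 : CStepU ⟨mkEnv r tL tR uL uR, GP (eProc idL 0 .wOff) (eProc idR 1 eR)⟩
          .tau ⟨mkEnv r tL tR valOff uR, GP (eProc idL 0 .tk) (eProc idR 1 eR)⟩ := by
        exact write_step_L ((ustep_WOff_iff (ID := idL) (a := 0) (s := 0)).mpr ⟨rfl, rfl⟩) hinv
      exact ⟨.tk, valOff, trivial, ⟨by linarith, by linarith⟩,
        by norm_num [eCoolOK, IsOff, valOff], Relation.ReflTransGen.single s2⟩
  | cl k =>
      cases k with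
      | succ k => exact ⟨.cl (k+1), uL, trivial, htL, huL, .refl⟩
      | zero =>
          obtain ⟨-, ht1, ht2⟩ := htL
          norm_num at ht1 ht2
          have s1 : CStepU ⟨mkEnv r tL tR uL uR, GP (eProc idL 0 (.cl 0)) (eProc idR 1 eR)⟩
              .tau ⟨mkEnv r tL tR uL uR, GP (eProc idL 0 .wOff) (eProc idR 1 eR)⟩ := by
            refine CStepU.sensRead (ustep_GP_L (ustep_RdY_iff.mpr
              ⟨tL, rfl, (if_neg (by push_neg; linarith)).symm⟩)
              (fun _ => ⟨nofun, nofun⟩) nofun) hinv ?_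
            rw [readSensor_mkEnv0]; exact self_mem_read
          have s2 : CStepU ⟨mkEnv r tL tR uL uR, GP (eProc idL 0 .wOff) (eProc idR 1 eR)⟩
              .tau ⟨mkEnv r tL tR valOff uR, GP (eProc idL 0 .tk) (eProc idR 1 eR)⟩ := by
            exact write_step_L ((ustep_WOff_iff (ID := idL) (a := 0) (s := 0)).mpr ⟨rfl, rfl⟩) hinv
          exact ⟨.tk, valOff, trivial, ⟨by linarith, by linarith⟩,
            by norm_num [eCoolOK, IsOff, valOff],
            Relation.ReflTransGen.head s1 (Relation.ReflTransGen.single s2)⟩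

theorem drive_R {r tL tR uL uR : ℝ} {eL eR : ESt}
    (htL : eTempOK eL tL) (htR : eTempOK eR tR) (huR : eCoolOK eR uR) :
    ∃ eR' uR', EQuiet eR' ∧ eTempOK eR' tR ∧ eCoolOK eR' uR' ∧
      WeakTau ⟨mkEnv r tL tR uL uR, GP (eProc idL 0 eL) (eProc idR 1 eR)⟩
        ⟨mkEnv r tL tR uL uR', GP (eProc idL 0 eL) (eProc idR 1 eR')⟩ := by
  have hinv : invHolds (mkEnv r tL tR uL uR) := invHolds_of_good htL htR
  cases eR with
  | tk => exact ⟨.tk, uR, trivial, htR, huR, .refl⟩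
  | yfix => exact ⟨.yfix, uR, trivial, htR, huR, .refl⟩
  | rd =>
      obtain ⟨ht1, ht2⟩ := htR
      by_cases h10 : 10 < tR
      · have s1 : CStepU ⟨mkEnv r tL tR uL uR, GP (eProc idL 0 eL) (eProc idR 1 .rd)⟩
            .tau ⟨mkEnv r tL tR uL uR, GP (eProc idL 0 eL) (eProc idR 1 .wOn)⟩ := by
          refine CStepU.sensRead (ustep_GP_R (ustep_CtrlN_iff.mpr
            ⟨tR, rfl, (if_pos h10).symm⟩) (fun _ => ⟨nofun, nofun⟩) nofun) hinv ?_
          rw [readSensor_mkEnv1]; exact self_mem_read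
        have s2 : CStepU ⟨mkEnv r tL tR uL uR, GP (eProc idL 0 eL) (eProc idR 1 .wOn)⟩
            .tau ⟨mkEnv r tL tR uL valOn, GP (eProc idL 0 eL) (eProc idR 1 .yfix)⟩ := by
          exact write_step_R ((ustep_WOn_iff (ID := idR) (a := 1) (s := 1)).mpr ⟨rfl, rfl⟩) hinv
        exact ⟨.yfix, valOn, trivial, ⟨by linarith, ht2⟩,
          by norm_num [eCoolOK, IsOn, valOn],
          Relation.ReflTransGen.head s1 (Relation.ReflTransGen.single s2)⟩
      · push_neg at h10
        have s1 : CStepU ⟨mkEnv r tL tR uL uR, GP (eProc idL 0 eL) (eProc idR 1 .rd)⟩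
            .tau ⟨mkEnv r tL tR uL uR, GP (eProc idL 0 eL) (eProc idR 1 .tk)⟩ := by
          refine CStepU.sensRead (ustep_GP_R (ustep_CtrlN_iff.mpr
            ⟨tR, rfl, (if_neg (not_lt.mpr h10)).symm⟩) (fun _ => ⟨nofun, nofun⟩) nofun) hinv ?_
          rw [readSensor_mkEnv1]; exact self_mem_read
        exact ⟨.tk, uR, trivial, ⟨ht1, by linarith⟩, huR,
          Relation.ReflTransGen.single s1⟩
  | wOn =>
      have s2 : CStepU ⟨mkEnv r tL tR uL uR, GP (eProc idL 0 eL) (eProc idR 1 .wOn)⟩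
          .tau ⟨mkEnv r tL tR uL valOn, GP (eProc idL 0 eL) (eProc idR 1 .yfix)⟩ := by
        exact write_step_R ((ustep_WOn_iff (ID := idR) (a := 1) (s := 1)).mpr ⟨rfl, rfl⟩) hinv
      exact ⟨.yfix, valOn, trivial, htR, by norm_num [eCoolOK, IsOn, valOn],
        Relation.ReflTransGen.single s2⟩
  | wOff =>
      obtain ⟨ht1, ht2⟩ := htR
      have s2 : CStepU ⟨mkEnv r tL tR uL uR, GP (eProc idL 0 eL) (eProc idR 1 .wOff)⟩
          .tau ⟨mkEnv r tL tR uL valOff, GP (eProc idL 0 eL) (eProc idR 1 .tk)⟩ := by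
        exact write_step_R ((ustep_WOff_iff (ID := idR) (a := 1) (s := 1)).mpr ⟨rfl, rfl⟩) hinv
      exact ⟨.tk, valOff, trivial, ⟨by linarith, by linarith⟩,
        by norm_num [eCoolOK, IsOff, valOff], Relation.ReflTransGen.single s2⟩
  | cl k =>
      cases k with
      | succ k => exact ⟨.cl (k+1), uR, trivial, htR, huR, .refl⟩
      | zero =>
          obtain ⟨-, ht1, ht2⟩ := htR
          norm_num at ht1 ht2
          have s1 : CStepU ⟨mkEnv r tL tR uL uR, GP (eProc idL 0 eL) (eProc idR 1 (.cl 0))⟩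
              .tau ⟨mkEnv r tL tR uL uR, GP (eProc idL 0 eL) (eProc idR 1 .wOff)⟩ := by
            refine CStepU.sensRead (ustep_GP_R (ustep_RdY_iff.mpr
              ⟨tR, rfl, (if_neg (by push_neg; linarith)).symm⟩)
              (fun _ => ⟨nofun, nofun⟩) nofun) hinv ?_
            rw [readSensor_mkEnv1]; exact self_mem_read
          have s2 : CStepU ⟨mkEnv r tL tR uL uR, GP (eProc idL 0 eL) (eProc idR 1 .wOff)⟩
              .tau ⟨mkEnv r tL tR uL valOff, GP (eProc idL 0 eL) (eProc idR 1 .tk)⟩ := by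
            exact write_step_R ((ustep_WOff_iff (ID := idR) (a := 1) (s := 1)).mpr ⟨rfl, rfl⟩) hinv
          exact ⟨.tk, valOff, trivial, ⟨by linarith, by linarith⟩,
            by norm_num [eCoolOK, IsOff, valOff],
            Relation.ReflTransGen.head s1 (Relation.ReflTransGen.single s2)⟩

theorem good_weak_tick {r : ℝ} {M : CPS} (hr8 : 0.8 ≤ r) (hr1 : r ≤ 1)
    (hG : GoodS r M) : ∃ M', WeakStep M .tick M' ∧ GoodS r M' := by
  obtain ⟨E, P⟩ := M
  obtain ⟨eL, eR, tL, tR, uL, uR, hp, he, htL, htR, huL, huR⟩ := hG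
  simp only at hp he
  subst hp he
  obtain ⟨eL', uL', hqL, htL', huL', hw1⟩ :=
    drive_L (r:=r) (uR:=uR) (eR:=eR) htL htR huL
  obtain ⟨eR', uR', hqR, htR', huR', hw2⟩ :=
    drive_R (r:=r) (uL:=uL') (eL:=eL') htL' htR huR
  set M1 : CPS := ⟨mkEnv r tL tR uL' uR', GP (eProc idL 0 eL') (eProc idR 1 eR')⟩
  have hinv : invHolds (mkEnv r tL tR uL' uR') := invHolds_of_good htL' htR'
  set M2 : CPS := ⟨mkEnv r (tL + engHeat r uL' + 0) (tR + engHeat r uR' + 0) uL' uR',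
    GP (eProc idL 0 (qnext eL')) (eProc idR 1 (qnext eR'))⟩
  have htick : CStep M1 .tick M2 := by
    refine ⟨tstep_GP_quiet hqL hqR, no_tau_quiet hqL hqR, hinv, ?_⟩
    exact mem_nextEnv_mkEnv.mpr ⟨0, by constructor <;> norm_num [engDelta],
      0, by constructor <;> norm_num [engDelta], rfl⟩
  obtain ⟨htL'', huL''⟩ := quiet_next_ok (γ := 0) hr8 hr1 hqL htL' huL'
    (by norm_num [engDelta]) (by norm_num [engDelta])
  obtain ⟨htR'', huR''⟩ := quiet_next_ok (γ := 0) hr8 hr1 hqR htR' huR'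
    (by norm_num [engDelta]) (by norm_num [engDelta])
  refine ⟨M2, ⟨M1, M2, ?_, htick, .refl⟩, ?_⟩
  · exact Relation.ReflTransGen.trans hw1 hw2
  · exact ⟨qnext eL', qnext eR', _, _, uL', uR', rfl, rfl, htL'', htR'', huL'', huR''⟩
/-! ### Assembling the bisimulation -/

def GoodC (M : CPS) : Prop := ∃ r, 0.8 ≤ r ∧ r ≤ 1 ∧ GoodS r M

theorem goodC_initial {r : ℝ} (hr8 : 0.8 ≤ r) (hr1 : r ≤ 1) : GoodC (AirplaneGen r) := by
  refine ⟨r, hr8, hr1, .rd, .rd, 0, 0, valOff, valOff, rfl, AirplaneGen_env r, ?_, ?_, ?_, ?_⟩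
  · exact ⟨le_refl 0, by norm_num⟩
  · exact ⟨le_refl 0, by norm_num⟩
  · norm_num [eCoolOK, IsOff, valOff]
  · norm_num [eCoolOK, IsOff, valOff]

theorem airplane_bisim' : Bisim Airplane AirplaneBar := by
  refine ⟨fun M N => GoodC M ∧ GoodC N, ⟨fun h => ⟨h.2, h.1⟩, ?_⟩,
    goodC_initial (by norm_num) le_rfl, goodC_initial (by norm_num) (by norm_num)⟩
  intro M N α M' hMN hstep
  obtain ⟨⟨r, hr8, hr1, hG⟩, hN⟩ := hMN
  cases α with
  | tick =>
      have hM' : GoodS r M' := cstep_tick_good hr8 hr1 hG hstep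
      obtain ⟨rN, hrN8, hrN1, hGN⟩ := hN
      obtain ⟨N', hw, hGN'⟩ := good_weak_tick hrN8 hrN1 hGN
      exact ⟨N', hw, ⟨r, hr8, hr1, hM'⟩, rN, hrN8, hrN1, hGN'⟩
  | tau =>
      obtain ⟨-, hM'⟩ := cstepu_good hG hstep
      exact ⟨N, Relation.ReflTransGen.refl, ⟨r, hr8, hr1, hM'⟩, hN⟩
  | out c v => exact absurd (cstepu_good hG hstep).1 nofun
  | inp c v => exact absurd (cstepu_good hG hstep).1 nofun
  | write a v => exact absurd (cstepu_good hG hstep).1 nofun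
  | read s v => exact absurd (cstepu_good hG hstep).1 nofun
end

/-- **Bisimilarity of airplanes** (Proposition 5):
`Airplane ≈ Airplanē`, where the latter is equipped with the variant engines
of cooling power 0.8. -/
theorem airplane_bisim : Bisim Airplane AirplaneBar := airplane_bisim'

end CCPS
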